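/- arXiv:2502.17578 — 9 statements merged into one kernel-verified Lean document; each statement's English description precedes it below -/
import Mathlib

section
/- Let f : [0,1] → ℝ be a probability density function (f is nonnegative and integrable with ∫₀¹ f(p) dp = 1). Suppose there exist constants b > 0, C > 0, θ > 0, K > 0 and δ > 0 such that for all 0 < p < δ, |f(p) − C·p^(b−1)| ≤ K·p^(b−1+θ). Then the integral I_k := ∫₀¹ (1−p)^k f(p) dp satisfies I_k = C·Γ(b)·k^(−b) + O(k^(−b−min(1,θ))) as k → ∞; that is, there exist constants M > 0 and k₀ such that for all k ≥ k₀, |I_k − C·Γ(b)·k^(−b)| ≤ M·k^(−b−min(1,θ)). -/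
set_option maxHeartbeats 1000000
open MeasureTheory Real Set Filter

lemma aux_one_sub_pow_le {p : ℝ} (hp1 : p ≤ 1) (k : ℕ) :
    (1 - p) ^ k ≤ Real.exp (-((k:ℝ) * p)) := by
  have h1 : 1 - p ≤ Real.exp (-p) := by linarith [Real.add_one_le_exp (-p)]
  calc (1-p)^k ≤ (Real.exp (-p))^k := pow_le_pow_left₀ (by linarith) h1 k
  _ = Real.exp (-((k:ℝ)*p)) := by rw [← Real.exp_nat_mul]; congr 1; ring

lemma aux_lower {p : ℝ} (hp1 : p ≤ 1/2) (k : ℕ) :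
    Real.exp (-((k:ℝ)*p)) - (1-p)^k ≤ 2*(k:ℝ)*p^2 * Real.exp (-((k:ℝ)*p)) := by
  have hx : (1 : ℝ) ≤ (1-p) * Real.exp (p + 2*p^2) := by
    nlinarith [Real.add_one_le_exp (p + 2*p^2), Real.exp_pos (p+2*p^2), sq_nonneg p]
  have e1 : Real.exp (-(p + 2*p^2)) ≤ 1 - p := by
    have h3 : Real.exp (-(p+2*p^2)) * Real.exp (p+2*p^2) = 1 := by
      rw [← Real.exp_add, show -(p+2*p^2) + (p+2*p^2) = 0 by ring, Real.exp_zero]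
    nlinarith [Real.exp_pos (-(p+2*p^2)), Real.exp_pos (p+2*p^2)]
  have l1 : (Real.exp (-(p+2*p^2)))^k ≤ (1-p)^k :=
    pow_le_pow_left₀ (Real.exp_nonneg _) e1 k
  have l2 : (Real.exp (-(p+2*p^2)))^k
      = Real.exp (-((k:ℝ)*p)) * Real.exp (-((k:ℝ)*(2*p^2))) := by
    rw [← Real.exp_nat_mul, ← Real.exp_add]; congr 1; ring
  have l3 : 1 - (k:ℝ)*(2*p^2) ≤ Real.exp (-((k:ℝ)*(2*p^2))) := by
    linarith [Real.add_one_le_exp (-((k:ℝ)*(2*p^2)))]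
  nlinarith [Real.exp_pos (-((k:ℝ)*p)),
    mul_le_mul_of_nonneg_left l3 (Real.exp_nonneg (-((k:ℝ)*p)))]

lemma aux_integrable {s : ℝ} (hs : 0 < s) {r : ℝ} (hr : 0 < r) :
    IntegrableOn (fun t : ℝ => t^(s-1) * Real.exp (-(r*t))) (Ioi 0) := by
  have h := integrableOn_rpow_mul_exp_neg_mul_rpow
    (by linarith : (-1:ℝ) < s-1) (one_pos (α := ℝ)) hr
  refine h.congr_fun (fun x hx => ?_) measurableSet_Ioi
  simp only [Real.rpow_one, neg_mul]

lemma aux_geom {r : ℝ} (hr0 : 0 < r) (hr1 : r < 1) (s : ℝ) :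
    ∃ k₁ : ℕ, ∀ k : ℕ, k₁ ≤ k → r ^ k ≤ (k : ℝ) ^ (-s) := by
  have ha : 0 < -Real.log r := by
    have := Real.log_neg hr0 hr1; linarith
  have h := isLittleO_rpow_exp_pos_mul_atTop s ha
  have h2 := (h.def one_pos).and (eventually_ge_atTop (1:ℝ))
  rw [eventually_atTop] at h2
  obtain ⟨x₀, hx₀⟩ := h2
  refine ⟨max (Nat.ceil x₀) 1, fun k hk => ?_⟩
  have hk1 : (1:ℕ) ≤ k := le_trans (le_max_right _ _) hk
  have hkx : x₀ ≤ (k:ℝ) := by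
    calc x₀ ≤ (Nat.ceil x₀ : ℝ) := Nat.le_ceil _
    _ ≤ (k:ℝ) := by exact_mod_cast le_trans (le_max_left _ _) hk
  obtain ⟨hb, hk1'⟩ := hx₀ (k:ℝ) hkx
  have hkpos : (0:ℝ) < (k:ℝ) := by positivity
  have hrk : r ^ k = Real.exp (-(-Real.log r * (k:ℝ))) := by
    rw [neg_mul, neg_neg, mul_comm, Real.exp_nat_mul, Real.exp_log hr0]
  have hb' : (k:ℝ)^s ≤ Real.exp (-Real.log r * (k:ℝ)) := by
    rwa [Real.norm_eq_abs, Real.norm_eq_abs, one_mul,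
      abs_of_nonneg (Real.rpow_nonneg hkpos.le s),
      abs_of_nonneg (Real.exp_nonneg _)] at hb
  rw [hrk, Real.rpow_neg hkpos.le, Real.exp_neg]
  exact inv_anti₀ (Real.rpow_pos_of_pos hkpos s) hb'

/-- **Sufficiency of a power-law left tail (integral form).**
If a probability density `f` on `[0,1]` satisfies
`f(p) = C·p^(b-1) + O(p^(b-1+θ))` near `0`, then
`I_k = ∫₀¹ (1-p)^k f(p) dp = C·Γ(b)·k^(-b) + O(k^(-b-min(1,θ)))` as `k → ∞`. -/
theorem integral_pow_density_asymptotic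
    (f : ℝ → ℝ)
    (hf_nonneg : ∀ p ∈ Set.Icc (0:ℝ) 1, 0 ≤ f p)
    (hf_int : IntervalIntegrable f volume 0 1)
    (hf_prob : (∫ p in (0:ℝ)..1, f p) = 1)
    (b C θ K δ : ℝ)
    (hb : 0 < b) (hC : 0 < C) (hθ : 0 < θ) (hK : 0 < K) (hδ : 0 < δ)
    (hf_tail : ∀ p : ℝ, 0 < p → p < δ → |f p - C * p ^ (b - 1)| ≤ K * p ^ (b - 1 + θ)) :
    ∃ M > (0:ℝ), ∃ k₀ : ℕ, ∀ k : ℕ, k₀ ≤ k →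
      |(∫ p in (0:ℝ)..1, (1 - p) ^ k * f p) - C * Real.Gamma b * (k : ℝ) ^ (-b)|
        ≤ M * (k : ℝ) ^ (-(b + min 1 θ)) := by
  set m := min (1:ℝ) θ with hm
  have hm0 : 0 < m := lt_min one_pos hθ
  have hm1 : m ≤ 1 := min_le_left _ _
  have hmθ : m ≤ θ := min_le_right _ _
  set c := min (δ/2) (1/2 : ℝ) with hcdef
  have hc0 : 0 < c := lt_min (by linarith) (by norm_num)
  have hc2 : c ≤ 1/2 := min_le_right _ _
  have hcδ : c < δ := lt_of_le_of_lt (min_le_left _ _) (by linarith)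
  have hc1 : c ≤ 1 := by linarith
  set r := max (1-c) (Real.exp (-(c/2))) with hrdef
  have hr0 : 0 < r := lt_of_lt_of_le (Real.exp_pos _) (le_max_right _ _)
  have hr1 : r < 1 := by
    apply max_lt (by linarith)
    rw [Real.exp_lt_one_iff]; linarith
  obtain ⟨k₁, hk₁⟩ := aux_geom hr0 hr1 (b+1)
  have hΓθ : 0 < Real.Gamma (b+θ) := Real.Gamma_pos_of_pos (by linarith)
  have hΓ2 : 0 < Real.Gamma (b+2) := Real.Gamma_pos_of_pos (by linarith)
  have hΓb : 0 < Real.Gamma b := Real.Gamma_pos_of_pos hb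
  have h2b : (0:ℝ) < 2^b := Real.rpow_pos_of_pos (by norm_num) b
  set M := K * Real.Gamma (b+θ) + 1 + 2*C*Real.Gamma (b+2) + C*(Real.Gamma b * 2^b) with hM
  have hM0 : 0 < M := by positivity
  refine ⟨M, hM0, max k₁ 2, fun k hk => ?_⟩
  have hk2 : 2 ≤ k := le_trans (le_max_right _ _) hk
  have hkk1 : k₁ ≤ k := le_trans (le_max_left _ _) hk
  set kR := (k:ℝ) with hkR
  have hk1' : (1:ℝ) ≤ kR := by
    rw [hkR]; exact_mod_cast le_trans one_le_two hk2
  have hk0' : (0:ℝ) < kR := by linarith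
  have hk0h : (0:ℝ) < kR/2 := by linarith
  -- integrability facts
  have cont1 : ∀ a b : ℝ, ContinuousOn (fun p : ℝ => (1-p)^k) (uIcc a b) :=
    fun a b => ((continuous_const.sub continuous_id).pow k).continuousOn
  have hf_sub : IntervalIntegrable f volume 0 c := by
    apply hf_int.mono_set
    rw [Set.uIcc_of_le hc0.le, Set.uIcc_of_le zero_le_one]
    exact Set.Icc_subset_Icc le_rfl hc1
  have hf_sub2 : IntervalIntegrable f volume c 1 := by
    apply hf_int.mono_set
    rw [Set.uIcc_of_le hc1, Set.uIcc_of_le zero_le_one]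
    exact Set.Icc_subset_Icc hc0.le le_rfl
  have hrpow1 : IntervalIntegrable (fun p:ℝ => p^(b-1)) volume 0 c :=
    intervalIntegral.intervalIntegrable_rpow' (by linarith)
  have hg1 : IntervalIntegrable (fun p => (1-p)^k * f p) volume 0 c :=
    hf_sub.continuousOn_mul (cont1 0 c)
  have hg2 : IntervalIntegrable (fun p => (1-p)^k * f p) volume c 1 :=
    hf_sub2.continuousOn_mul (cont1 c 1)
  have hdiff : IntervalIntegrable (fun p => f p - C * p^(b-1)) volume 0 c :=
    hf_sub.sub (hrpow1.const_mul C)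
  have hA : IntervalIntegrable (fun p => (1-p)^k * (f p - C*p^(b-1))) volume 0 c :=
    hdiff.continuousOn_mul (cont1 0 c)
  have hX : IntervalIntegrable (fun p => (1-p)^k * p^(b-1)) volume 0 c :=
    hrpow1.continuousOn_mul (cont1 0 c)
  have hY : IntervalIntegrable (fun p => p^(b-1) * Real.exp (-(kR*p))) volume 0 c := by
    rw [intervalIntegrable_iff_integrableOn_Ioc_of_le hc0.le]
    exact (aux_integrable hb hk0').mono_set Ioc_subset_Ioi_self
  have hHθ : IntervalIntegrable (fun p => p^((b+θ)-1) * Real.exp (-(kR*p))) volume 0 c := by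
    rw [intervalIntegrable_iff_integrableOn_Ioc_of_le hc0.le]
    exact (aux_integrable (by linarith) hk0').mono_set Ioc_subset_Ioi_self
  have hH2 : IntervalIntegrable (fun p => p^((b+2)-1) * Real.exp (-(kR*p))) volume 0 c := by
    rw [intervalIntegrable_iff_integrableOn_Ioc_of_le hc0.le]
    exact (aux_integrable (by linarith) hk0').mono_set Ioc_subset_Ioi_self
  -- Gamma evaluations
  have gamθ : (∫ t in Ioi (0:ℝ), t^((b+θ)-1) * Real.exp (-(kR*t)))
      = (1/kR)^(b+θ) * Real.Gamma (b+θ) :=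
    Real.integral_rpow_mul_exp_neg_mul_Ioi (by linarith) hk0'
  have gam2 : (∫ t in Ioi (0:ℝ), t^((b+2)-1) * Real.exp (-(kR*t)))
      = (1/kR)^(b+2) * Real.Gamma (b+2) :=
    Real.integral_rpow_mul_exp_neg_mul_Ioi (by linarith) hk0'
  have gamb : (∫ t in Ioi (0:ℝ), t^(b-1) * Real.exp (-(kR*t)))
      = (1/kR)^b * Real.Gamma b :=
    Real.integral_rpow_mul_exp_neg_mul_Ioi hb hk0'
  have gamb2 : (∫ t in Ioi (0:ℝ), t^(b-1) * Real.exp (-(kR/2*t)))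
      = (1/(kR/2))^b * Real.Gamma b :=
    Real.integral_rpow_mul_exp_neg_mul_Ioi hb hk0h
  set T1 := ∫ p in (0:ℝ)..c, (1-p)^k * (f p - C*p^(b-1)) with hT1def
  set T2 := ∫ p in c..1, (1-p)^k * f p with hT2def
  set X := ∫ p in (0:ℝ)..c, (1-p)^k * p^(b-1) with hXdef
  set Y := ∫ p in (0:ℝ)..c, p^(b-1) * Real.exp (-(kR*p)) with hYdef
  set Z := ∫ p in Ioi c, p^(b-1) * Real.exp (-(kR*p)) with hZdef
  have hpowb : kR^(-b) = (1/kR)^b := by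
    rw [one_div, Real.rpow_neg hk0'.le, ← Real.inv_rpow hk0'.le]
  -- key decomposition
  have key : (∫ p in (0:ℝ)..1, (1-p)^k * f p) - C * Real.Gamma b * kR^(-b)
      = T1 + T2 + C*(X - Y) - C*Z := by
    have s1 : (∫ p in (0:ℝ)..1, (1-p)^k * f p)
        = (∫ p in (0:ℝ)..c, (1-p)^k * f p) + T2 :=
      (intervalIntegral.integral_add_adjacent_intervals hg1 hg2).symm
    have s2 : (∫ p in (0:ℝ)..c, (1-p)^k * f p) = T1 + C*X := by
      have e : (∫ p in (0:ℝ)..c, (1-p)^k * f p)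
          = ∫ p in (0:ℝ)..c, ((1-p)^k * (f p - C*p^(b-1)) + C*((1-p)^k * p^(b-1))) :=
        intervalIntegral.integral_congr (fun p _ => by ring)
      rw [e, intervalIntegral.integral_add hA (hX.const_mul C),
        intervalIntegral.integral_const_mul]
    have hsplit : (∫ t in Ioi (0:ℝ), t^(b-1) * Real.exp (-(kR*t))) = Y + Z := by
      rw [show Ioi (0:ℝ) = Ioc 0 c ∪ Ioi c from (Ioc_union_Ioi_eq_Ioi hc0.le).symm,
        setIntegral_union (Ioc_disjoint_Ioi le_rfl) measurableSet_Ioi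
          ((aux_integrable hb hk0').mono_set Ioc_subset_Ioi_self)
          ((aux_integrable hb hk0').mono_set (Ioi_subset_Ioi hc0.le)),
        hYdef, intervalIntegral.integral_of_le hc0.le]
    have s3 : C * Real.Gamma b * kR^(-b) = C*Y + C*Z := by
      rw [hpowb]
      calc C * Real.Gamma b * (1/kR)^b = C * ((1/kR)^b * Real.Gamma b) := by ring
      _ = C * (Y + Z) := by rw [← gamb, hsplit]
      _ = C*Y + C*Z := by ring
    rw [s1, s2, s3]; ring
  -- bound T1
  have bT1 : |T1| ≤ K * Real.Gamma (b+θ) * kR^(-(b+θ)) := by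
    have step1 : |T1| ≤ ∫ p in (0:ℝ)..c, |(1-p)^k * (f p - C*p^(b-1))| :=
      intervalIntegral.abs_integral_le_integral_abs hc0.le
    have step2 : (∫ p in (0:ℝ)..c, |(1-p)^k * (f p - C*p^(b-1))|)
        ≤ ∫ p in (0:ℝ)..c, K * (p^((b+θ)-1) * Real.exp (-(kR*p))) := by
      rw [intervalIntegral.integral_of_le hc0.le, intervalIntegral.integral_of_le hc0.le]
      refine setIntegral_mono_on
        ((intervalIntegrable_iff_integrableOn_Ioc_of_le hc0.le).1 hA.abs)
        ((intervalIntegrable_iff_integrableOn_Ioc_of_le hc0.le).1 (hHθ.const_mul K))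
        measurableSet_Ioc (fun p hp => ?_)
      obtain ⟨hp0, hpc⟩ := hp
      have hfp := hf_tail p hp0 (lt_of_le_of_lt hpc hcδ)
      have h1k : (1-p)^k ≤ Real.exp (-(kR*p)) := aux_one_sub_pow_le (by linarith) k
      have habs : |(1-p)^k * (f p - C*p^(b-1))| = (1-p)^k * |f p - C*p^(b-1)| := by
        rw [abs_mul, abs_of_nonneg (pow_nonneg (by linarith) k)]
      rw [habs]
      calc (1-p)^k * |f p - C*p^(b-1)|
          ≤ Real.exp (-(kR*p)) * (K * p^(b-1+θ)) :=
            mul_le_mul h1k hfp (abs_nonneg _) (Real.exp_nonneg _)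
      _ = K * (p^((b+θ)-1) * Real.exp (-(kR*p))) := by
            rw [show b-1+θ = (b+θ)-1 by ring]; ring
    have step4 : (∫ p in (0:ℝ)..c, p^((b+θ)-1) * Real.exp (-(kR*p)))
        ≤ ∫ t in Ioi (0:ℝ), t^((b+θ)-1) * Real.exp (-(kR*t)) := by
      rw [intervalIntegral.integral_of_le hc0.le]
      refine setIntegral_mono_set (aux_integrable (by linarith) hk0') ?_ ?_
      · filter_upwards [ae_restrict_mem measurableSet_Ioi] with t ht
        have : (0:ℝ) < t := ht
        positivity
      · exact HasSubset.Subset.eventuallyLE Ioc_subset_Ioi_self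
    have hpowθ : (1/kR)^(b+θ) = kR^(-(b+θ)) := by
      rw [one_div, Real.rpow_neg hk0'.le, ← Real.inv_rpow hk0'.le]
    calc |T1| ≤ ∫ p in (0:ℝ)..c, K * (p^((b+θ)-1) * Real.exp (-(kR*p))) :=
          le_trans step1 step2
    _ = K * ∫ p in (0:ℝ)..c, p^((b+θ)-1) * Real.exp (-(kR*p)) :=
          intervalIntegral.integral_const_mul _ _
    _ ≤ K * ((1/kR)^(b+θ) * Real.Gamma (b+θ)) := by
          rw [← gamθ]; exact mul_le_mul_of_nonneg_left step4 hK.le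
    _ = K * Real.Gamma (b+θ) * kR^(-(b+θ)) := by rw [hpowθ]; ring
  -- bound T2
  have bT2 : |T2| ≤ (1-c)^k := by
    have hnn : ∀ p ∈ Icc c 1, 0 ≤ (1-p)^k * f p := fun p hp =>
      mul_nonneg (pow_nonneg (by linarith [hp.2]) k)
        (hf_nonneg p ⟨by linarith [hp.1], hp.2⟩)
    have habs : |T2| = T2 :=
      abs_of_nonneg (intervalIntegral.integral_nonneg hc1 hnn)
    have hmono : T2 ≤ ∫ p in c..1, (1-c)^k * f p := by
      refine intervalIntegral.integral_mono_on hc1 hg2 (hf_sub2.const_mul _)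
        (fun p hp => ?_)
      exact mul_le_mul_of_nonneg_right
        (pow_le_pow_left₀ (by linarith [hp.2]) (by linarith [hp.1]) k)
        (hf_nonneg p ⟨by linarith [hp.1], hp.2⟩)
    have hfc1 : (∫ p in c..1, f p) ≤ 1 := by
      have e : (∫ p in (0:ℝ)..c, f p) + (∫ p in c..1, f p) = 1 := by
        rw [intervalIntegral.integral_add_adjacent_intervals hf_sub hf_sub2, hf_prob]
      have : 0 ≤ ∫ p in (0:ℝ)..c, f p :=
        intervalIntegral.integral_nonneg hc0.le
          (fun p hp => hf_nonneg p ⟨hp.1, by linarith [hp.2]⟩)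
      linarith
    calc |T2| = T2 := habs
    _ ≤ ∫ p in c..1, (1-c)^k * f p := hmono
    _ = (1-c)^k * ∫ p in c..1, f p := intervalIntegral.integral_const_mul _ _
    _ ≤ (1-c)^k * 1 := mul_le_mul_of_nonneg_left hfc1 (pow_nonneg (by linarith) k)
    _ = (1-c)^k := mul_one _
  -- bound X - Y
  have bXY : |X - Y| ≤ 2 * Real.Gamma (b+2) * kR^(-(b+1)) := by
    have e : X - Y = ∫ p in (0:ℝ)..c,
        ((1-p)^k * p^(b-1) - p^(b-1) * Real.exp (-(kR*p))) :=
      (intervalIntegral.integral_sub hX hY).symm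
    have step1 : |X - Y| ≤ ∫ p in (0:ℝ)..c,
        |(1-p)^k * p^(b-1) - p^(b-1) * Real.exp (-(kR*p))| := by
      rw [e]; exact intervalIntegral.abs_integral_le_integral_abs hc0.le
    have step2 : (∫ p in (0:ℝ)..c, |(1-p)^k * p^(b-1) - p^(b-1) * Real.exp (-(kR*p))|)
        ≤ ∫ p in (0:ℝ)..c, (2*kR) * (p^((b+2)-1) * Real.exp (-(kR*p))) := by
      rw [intervalIntegral.integral_of_le hc0.le, intervalIntegral.integral_of_le hc0.le]
      refine setIntegral_mono_on
        ((intervalIntegrable_iff_integrableOn_Ioc_of_le hc0.le).1 (hX.sub hY).abs)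
        ((intervalIntegrable_iff_integrableOn_Ioc_of_le hc0.le).1 (hH2.const_mul (2*kR)))
        measurableSet_Ioc (fun p hp => ?_)
      obtain ⟨hp0, hpc⟩ := hp
      have h1k : (1-p)^k ≤ Real.exp (-(kR*p)) := aux_one_sub_pow_le (by linarith) k
      have hlow := aux_lower (le_trans hpc hc2) k
      have hpb : (0:ℝ) ≤ p^(b-1) := Real.rpow_nonneg hp0.le _
      have habs : |(1-p)^k * p^(b-1) - p^(b-1) * Real.exp (-(kR*p))|
          = p^(b-1) * (Real.exp (-(kR*p)) - (1-p)^k) := by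
        rw [show (1-p)^k * p^(b-1) - p^(b-1) * Real.exp (-(kR*p))
            = -(p^(b-1) * (Real.exp (-(kR*p)) - (1-p)^k)) by ring, abs_neg,
          abs_of_nonneg (mul_nonneg hpb (by linarith))]
      have hpp : p^((b+2)-1) = p^(b-1) * p^2 := by
        rw [show b+2-1 = (b-1)+2 by ring, Real.rpow_add hp0,
          show (2:ℝ) = ((2:ℕ):ℝ) by norm_num, Real.rpow_natCast]
      rw [habs, hpp]
      calc p^(b-1) * (Real.exp (-(kR*p)) - (1-p)^k)
          ≤ p^(b-1) * (2*kR*p^2 * Real.exp (-(kR*p))) :=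
            mul_le_mul_of_nonneg_left hlow hpb
      _ = 2*kR * (p^(b-1) * p^2 * Real.exp (-(kR*p))) := by ring
    have step4 : (∫ p in (0:ℝ)..c, p^((b+2)-1) * Real.exp (-(kR*p)))
        ≤ ∫ t in Ioi (0:ℝ), t^((b+2)-1) * Real.exp (-(kR*t)) := by
      rw [intervalIntegral.integral_of_le hc0.le]
      refine setIntegral_mono_set (aux_integrable (by linarith) hk0') ?_ ?_
      · filter_upwards [ae_restrict_mem measurableSet_Ioi] with t ht
        have : (0:ℝ) < t := ht
        positivity
      · exact HasSubset.Subset.eventuallyLE Ioc_subset_Ioi_self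
    have hpow2 : 2*kR * ((1/kR)^(b+2) * Real.Gamma (b+2))
        = 2 * Real.Gamma (b+2) * kR^(-(b+1)) := by
      have h1 : (1/kR)^(b+2) = kR^(-(b+2)) := by
        rw [one_div, Real.inv_rpow hk0'.le, ← Real.rpow_neg hk0'.le]
      have h2 : kR^(-(b+1)) = kR * kR^(-(b+2)) := by
        rw [show -(b+1) = 1 + -(b+2) by ring, Real.rpow_add hk0', Real.rpow_one]
      rw [h1, h2]; ring
    have hint2nn : 0 ≤ ∫ t in Ioi (0:ℝ), t^((b+2)-1) * Real.exp (-(kR*t)) := by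
      refine setIntegral_nonneg measurableSet_Ioi (fun t ht => ?_)
      have : (0:ℝ) < t := ht
      positivity
    calc |X - Y| ≤ ∫ p in (0:ℝ)..c, (2*kR) * (p^((b+2)-1) * Real.exp (-(kR*p))) :=
          le_trans step1 step2
    _ = (2*kR) * ∫ p in (0:ℝ)..c, p^((b+2)-1) * Real.exp (-(kR*p)) :=
          intervalIntegral.integral_const_mul _ _
    _ ≤ (2*kR) * ((1/kR)^(b+2) * Real.Gamma (b+2)) := by
          rw [← gam2]; exact mul_le_mul_of_nonneg_left step4 (by positivity)
    _ = 2 * Real.Gamma (b+2) * kR^(-(b+1)) := hpow2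
  -- bound Z
  have hZnn : 0 ≤ Z := by
    refine setIntegral_nonneg measurableSet_Ioi (fun t ht => ?_)
    have htc : c < t := ht
    have : (0:ℝ) < t := lt_trans hc0 htc
    positivity
  have bZ : Z ≤ Real.Gamma b * 2^b * (Real.exp (-(c/2)))^k := by
    have stepa : Z ≤ ∫ t in Ioi c,
        Real.exp (-(kR*c/2)) * (t^(b-1) * Real.exp (-(kR/2*t))) := by
      refine setIntegral_mono_on
        ((aux_integrable hb hk0').mono_set (Ioi_subset_Ioi hc0.le))
        (((aux_integrable hb hk0h).mono_set (Ioi_subset_Ioi hc0.le)).const_mul _)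
        measurableSet_Ioi (fun t ht => ?_)
      have htc : c < t := ht
      have ht0 : (0:ℝ) < t := lt_trans hc0 htc
      have esplit : Real.exp (-(kR*t)) = Real.exp (-(kR/2*t)) * Real.exp (-(kR/2*t)) := by
        rw [← Real.exp_add]; congr 1; ring
      have ebound : Real.exp (-(kR/2*t)) ≤ Real.exp (-(kR*c/2)) := by
        apply Real.exp_le_exp.2; nlinarith
      calc t^(b-1) * Real.exp (-(kR*t))
          = (t^(b-1) * Real.exp (-(kR/2*t))) * Real.exp (-(kR/2*t)) := by
            rw [esplit]; ring
      _ ≤ (t^(b-1) * Real.exp (-(kR/2*t))) * Real.exp (-(kR*c/2)) := by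
            refine mul_le_mul_of_nonneg_left ebound (by positivity)
      _ = Real.exp (-(kR*c/2)) * (t^(b-1) * Real.exp (-(kR/2*t))) := by ring
    have stepb : (∫ t in Ioi c, t^(b-1) * Real.exp (-(kR/2*t)))
        ≤ ∫ t in Ioi (0:ℝ), t^(b-1) * Real.exp (-(kR/2*t)) := by
      refine setIntegral_mono_set (aux_integrable hb hk0h) ?_ ?_
      · filter_upwards [ae_restrict_mem measurableSet_Ioi] with t ht
        have : (0:ℝ) < t := ht
        positivity
      · exact HasSubset.Subset.eventuallyLE (Ioi_subset_Ioi hc0.le)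
    have hpowb2 : (1/(kR/2))^b ≤ 2^b := by
      apply Real.rpow_le_rpow (by positivity) ?_ hb.le
      rw [one_div_div]
      calc 2/kR ≤ 2/1 := by apply div_le_div_of_nonneg_left (by norm_num) one_pos hk1'
      _ = 2 := by norm_num
    have hexpk : Real.exp (-(kR*c/2)) = (Real.exp (-(c/2)))^k := by
      rw [← Real.exp_nat_mul]; congr 1; ring
    calc Z ≤ ∫ t in Ioi c, Real.exp (-(kR*c/2)) * (t^(b-1) * Real.exp (-(kR/2*t))) := stepa
    _ = Real.exp (-(kR*c/2)) * ∫ t in Ioi c, t^(b-1) * Real.exp (-(kR/2*t)) :=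
          integral_const_mul _ _
    _ ≤ Real.exp (-(kR*c/2)) * ∫ t in Ioi (0:ℝ), t^(b-1) * Real.exp (-(kR/2*t)) :=
          mul_le_mul_of_nonneg_left stepb (Real.exp_nonneg _)
    _ = Real.exp (-(kR*c/2)) * ((1/(kR/2))^b * Real.Gamma b) := by rw [gamb2]
    _ ≤ Real.exp (-(kR*c/2)) * (2^b * Real.Gamma b) := by
          refine mul_le_mul_of_nonneg_left
            (mul_le_mul_of_nonneg_right hpowb2 hΓb.le) (Real.exp_nonneg _)
    _ = Real.Gamma b * 2^b * (Real.exp (-(c/2)))^k := by rw [hexpk]; ring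
  -- geometric decay
  have hrk := hk₁ k hkk1
  have hgeo1 : (1-c)^k ≤ kR^(-(b+1)) :=
    le_trans (pow_le_pow_left₀ (by linarith) (le_max_left _ _) k) hrk
  have hgeo2 : (Real.exp (-(c/2)))^k ≤ kR^(-(b+1)) :=
    le_trans (pow_le_pow_left₀ (Real.exp_nonneg _) (le_max_right _ _) k) hrk
  -- exponent comparisons
  have hE1 : kR^(-(b+θ)) ≤ kR^(-(b+m)) :=
    Real.rpow_le_rpow_of_exponent_le hk1' (by linarith)
  have hE2 : kR^(-(b+1)) ≤ kR^(-(b+m)) :=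
    Real.rpow_le_rpow_of_exponent_le hk1' (by linarith)
  -- put it together
  rw [key]
  have tri : |T1 + T2 + C*(X - Y) - C*Z| ≤ |T1| + |T2| + C*|X - Y| + C*Z := by
    have h1 : |T1 + T2 + C*(X - Y) - C*Z| ≤ |T1 + T2 + C*(X-Y)| + |C*Z| := by
      rw [sub_eq_add_neg]
      exact (abs_add_le _ _).trans (le_of_eq (by rw [abs_neg]))
    have h2 : |T1 + T2 + C*(X-Y)| ≤ |T1 + T2| + |C*(X-Y)| := abs_add_le _ _
    have h3 : |T1 + T2| ≤ |T1| + |T2| := abs_add_le _ _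
    have h4 : |C*(X-Y)| = C*|X-Y| := by rw [abs_mul, abs_of_pos hC]
    have h5 : |C*Z| = C*Z := by rw [abs_mul, abs_of_pos hC, abs_of_nonneg hZnn]
    linarith [h1, h2, h3, h4.le, h4.ge, h5.le, h5.ge]
  have hrpownn : (0:ℝ) ≤ kR^(-(b+1)) := Real.rpow_nonneg hk0'.le _
  calc |T1 + T2 + C*(X - Y) - C*Z| ≤ |T1| + |T2| + C*|X - Y| + C*Z := tri
  _ ≤ K * Real.Gamma (b+θ) * kR^(-(b+θ)) + kR^(-(b+1))
      + C*(2 * Real.Gamma (b+2) * kR^(-(b+1)))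
      + C*(Real.Gamma b * 2^b * kR^(-(b+1))) := by
      have hz2 : Z ≤ Real.Gamma b * 2^b * kR^(-(b+1)) :=
        le_trans bZ (mul_le_mul_of_nonneg_left hgeo2 (by positivity))
      have ht2 : |T2| ≤ kR^(-(b+1)) := le_trans bT2 hgeo1
      have hxy : C*|X-Y| ≤ C*(2 * Real.Gamma (b+2) * kR^(-(b+1))) :=
        mul_le_mul_of_nonneg_left bXY hC.le
      have hz3 : C*Z ≤ C*(Real.Gamma b * 2^b * kR^(-(b+1))) :=
        mul_le_mul_of_nonneg_left hz2 hC.le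
      linarith
  _ ≤ K * Real.Gamma (b+θ) * kR^(-(b+m)) + kR^(-(b+m))
      + C*(2 * Real.Gamma (b+2) * kR^(-(b+m)))
      + C*(Real.Gamma b * 2^b * kR^(-(b+m))) := by
      have e1 : K * Real.Gamma (b+θ) * kR^(-(b+θ)) ≤ K * Real.Gamma (b+θ) * kR^(-(b+m)) :=
        mul_le_mul_of_nonneg_left hE1 (by positivity)
      have e2 : C*(2 * Real.Gamma (b+2) * kR^(-(b+1)))
          ≤ C*(2 * Real.Gamma (b+2) * kR^(-(b+m))) := by
        refine mul_le_mul_of_nonneg_left (mul_le_mul_of_nonneg_left hE2 (by positivity)) hC.le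
      have e3 : C*(Real.Gamma b * 2^b * kR^(-(b+1)))
          ≤ C*(Real.Gamma b * 2^b * kR^(-(b+m))) := by
        refine mul_le_mul_of_nonneg_left (mul_le_mul_of_nonneg_left hE2 (by positivity)) hC.le
      linarith
  _ = M * kR^(-(b+m)) := by rw [hM]; ring
end

section
/- Let f : [0,1] → ℝ be a probability density function (f is nonnegative and integrable with ∫₀¹ f(p) dp = 1). Suppose there exist constants b > 0, C > 0, θ > 0, K > 0 and δ > 0 such that for all 0 < p < δ, |f(p) − C·p^(b−1)| ≤ K·p^(b−1+θ). Then −log(pass_D@k) is asymptotically equivalent to C·Γ(b)·k^(−b) as k → ∞; that is, (−log(pass_D@k)) / (C·Γ(b)·k^(−b)) → 1 as k → ∞. -/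
open MeasureTheory Real Filter

lemma lemA {s : ℝ} (hs : 0 < s) :
    Tendsto (fun k : ℕ => (k : ℝ) ^ s * ∫ p in (0:ℝ)..1, p ^ (s - 1) * (1 - p) ^ k)
      atTop (nhds (Real.Gamma s)) := by
  have key : ∀ k : ℕ, ((( (k : ℝ) ^ s * ∫ p in (0:ℝ)..1, p ^ (s - 1) * (1 - p) ^ k : ℝ)) : ℂ)
      = Complex.GammaSeq (s : ℂ) k := by
    intro k
    rw [Complex.GammaSeq_eq_betaIntegral_of_re_pos (by simpa using hs) k]
    rw [Complex.betaIntegral]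
    push_cast
    rw [← intervalIntegral.integral_ofReal]
    congr 1
    · rw [Complex.ofReal_cpow (Nat.cast_nonneg k)]; norm_num
    · apply intervalIntegral.integral_congr
      intro x hx
      rw [Set.uIcc_of_le (by norm_num : (0:ℝ) ≤ 1)] at hx
      push_cast
      rw [Complex.ofReal_cpow hx.1, add_sub_cancel_right, Complex.cpow_natCast]
      push_cast
      ring
  have h2 : Tendsto (fun k : ℕ => (((k : ℝ) ^ s * ∫ p in (0:ℝ)..1, p ^ (s - 1) * (1 - p) ^ k : ℝ) : ℂ))
      atTop (nhds ((Real.Gamma s : ℝ) : ℂ)) := by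
    rw [show ((Real.Gamma s : ℝ) : ℂ) = Complex.Gamma (s : ℂ) from (Complex.Gamma_ofReal s).symm]
    simp only [key]
    exact Complex.GammaSeq_tendsto_Gamma s
  have := (Complex.continuous_re.tendsto _).comp h2
  refine this.congr (fun k => ?_)
  simp [Function.comp]

lemma geom_poly {b r : ℝ} (hr0 : 0 ≤ r) (hr1 : r < 1) :
    Tendsto (fun k : ℕ => (k : ℝ) ^ b * r ^ k) atTop (nhds 0) := by
  have h1 : Tendsto (fun k : ℕ => (k : ℝ) ^ (⌈b⌉₊) * r ^ k) atTop (nhds 0) :=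
    tendsto_pow_const_mul_const_pow_of_abs_lt_one ⌈b⌉₊ (by rwa [abs_of_nonneg hr0])
  apply tendsto_of_tendsto_of_tendsto_of_le_of_le' tendsto_const_nhds h1
  · filter_upwards [eventually_ge_atTop 1] with k hk
    positivity
  · filter_upwards [eventually_ge_atTop 1] with k hk
    have hk1 : (1:ℝ) ≤ (k:ℝ) := by exact_mod_cast hk
    have : (k : ℝ) ^ b ≤ (k : ℝ) ^ (⌈b⌉₊ : ℝ) :=
      Real.rpow_le_rpow_of_exponent_le hk1 (Nat.le_ceil b)
    rw [Real.rpow_natCast] at this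
    exact mul_le_mul_of_nonneg_right this (by positivity)
lemma lemC (f : ℝ → ℝ)
    (hf_nonneg : ∀ p ∈ Set.Icc (0:ℝ) 1, 0 ≤ f p)
    (hf_int : IntervalIntegrable f volume 0 1)
    (hf_prob : (∫ p in (0:ℝ)..1, f p) = 1)
    (b C θ K δ : ℝ)
    (hb : 0 < b) (hC : 0 < C) (hθ : 0 < θ) (hK : 0 < K) (hδ : 0 < δ)
    (hf_tail : ∀ p : ℝ, 0 < p → p < δ → |f p - C * p ^ (b - 1)| ≤ K * p ^ (b - 1 + θ)) :
    Tendsto (fun k : ℕ => (k : ℝ) ^ b * ∫ p in (0:ℝ)..1, (1 - p) ^ k * f p)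
      atTop (nhds (C * Real.Gamma b)) := by
  set d : ℝ := min (δ/2) 2⁻¹ with hd_def
  have hd0 : 0 < d := lt_min (by linarith) (by norm_num)
  have hdδ : d < δ := lt_of_le_of_lt (min_le_left _ _) (by linarith)
  have hd1 : d < 1 := lt_of_le_of_lt (min_le_right _ _) (by norm_num)
  have hd01 : d ≤ 1 := hd1.le
  have hsub1 : Set.uIcc (0:ℝ) d ⊆ Set.uIcc (0:ℝ) 1 := by
    rw [Set.uIcc_of_le hd0.le, Set.uIcc_of_le (by norm_num : (0:ℝ) ≤ 1)]
    exact Set.Icc_subset_Icc le_rfl hd01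
  have hsub2 : Set.uIcc d (1:ℝ) ⊆ Set.uIcc (0:ℝ) 1 := by
    rw [Set.uIcc_of_le hd01, Set.uIcc_of_le (by norm_num : (0:ℝ) ≤ 1)]
    exact Set.Icc_subset_Icc hd0.le le_rfl
  have hcont : ∀ k : ℕ, Continuous fun p : ℝ => (1 - p) ^ k :=
    fun k => (continuous_const.sub continuous_id).pow k
  have hfi0d : IntervalIntegrable f volume 0 d := hf_int.mono_set hsub1
  have hfid1 : IntervalIntegrable f volume d 1 := hf_int.mono_set hsub2
  -- power integrands
  have hJ : ∀ (s : ℝ), 0 < s → ∀ k : ℕ,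
      IntervalIntegrable (fun p => p ^ (s - 1) * (1 - p) ^ k) volume 0 1 :=
    fun s hs k => (intervalIntegral.intervalIntegrable_rpow' (by linarith)).mul_continuousOn
      ((hcont k).continuousOn)
  have hJ0d : ∀ k : ℕ, IntervalIntegrable (fun p => p ^ (b - 1) * (1 - p) ^ k) volume 0 d :=
    fun k => (hJ b hb k).mono_set hsub1
  have hJd1 : ∀ k : ℕ, IntervalIntegrable (fun p => p ^ (b - 1) * (1 - p) ^ k) volume d 1 :=
    fun k => (hJ b hb k).mono_set hsub2
  have hF : ∀ k : ℕ, IntervalIntegrable (fun p => (1 - p) ^ k * f p) volume 0 1 :=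
    fun k => hf_int.continuousOn_mul ((hcont k).continuousOn)
  have hF0d : ∀ k : ℕ, IntervalIntegrable (fun p => (1 - p) ^ k * f p) volume 0 d :=
    fun k => (hF k).mono_set hsub1
  have hFd1 : ∀ k : ℕ, IntervalIntegrable (fun p => (1 - p) ^ k * f p) volume d 1 :=
    fun k => (hF k).mono_set hsub2
  have hE0d : ∀ k : ℕ,
      IntervalIntegrable (fun p => (1 - p) ^ k * (f p - C * p ^ (b - 1))) volume 0 d :=
    fun k => (hfi0d.sub (((intervalIntegral.intervalIntegrable_rpow'
      (by linarith : (-1:ℝ) < b - 1)).const_mul C))).continuousOn_mul ((hcont k).continuousOn)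
  have hG : ∀ k : ℕ,
      IntervalIntegrable (fun p => K * (p ^ (b + θ - 1) * (1 - p) ^ k)) volume 0 d :=
    fun k => ((hJ (b + θ) (by linarith) k).mono_set hsub1).const_mul K
  -- nonnegativity of f on pieces
  have hf_nonneg' : ∀ p ∈ Set.Icc d (1:ℝ), 0 ≤ f p :=
    fun p hp => hf_nonneg p ⟨le_trans hd0.le hp.1, hp.2⟩
  -- T1 : main term
  have T1 : Tendsto (fun k : ℕ => C * ((k:ℝ) ^ b * ∫ p in (0:ℝ)..1, p ^ (b - 1) * (1 - p) ^ k))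
      atTop (nhds (C * Real.Gamma b)) := (lemA hb).const_mul C
  -- T2 : tail of power integral
  have T2 : Tendsto (fun k : ℕ => C * ((k:ℝ) ^ b * ∫ p in d..(1:ℝ), p ^ (b - 1) * (1 - p) ^ k))
      atTop (nhds (C * 0)) := by
    apply Tendsto.const_mul
    have hM : Tendsto (fun k : ℕ => (∫ p in d..(1:ℝ), p ^ (b - 1)) * ((k:ℝ) ^ b * (1 - d) ^ k))
        atTop (nhds 0) := by
      simpa using (geom_poly (by linarith : (0:ℝ) ≤ 1 - d) (by linarith)).const_mul
        (∫ p in d..(1:ℝ), p ^ (b - 1))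
    apply squeeze_zero_norm' _ hM
    filter_upwards [] with k
    have hb1 : ‖∫ p in d..(1:ℝ), p ^ (b - 1) * (1 - p) ^ k‖
        ≤ |∫ p in d..(1:ℝ), p ^ (b - 1) * (1 - d) ^ k| := by
      apply intervalIntegral.norm_integral_le_abs_of_norm_le
      · rw [MeasureTheory.ae_restrict_iff' measurableSet_uIoc]
        filter_upwards [] with t ht
        rw [Set.uIoc_of_le hd01] at ht
        have ht0 : 0 < t := lt_of_lt_of_le hd0 ht.1.le
        have h1t : 0 ≤ 1 - t := by linarith [ht.2]
        rw [norm_mul, Real.norm_eq_abs, Real.norm_eq_abs, abs_of_nonneg (Real.rpow_nonneg ht0.le _),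
          abs_of_nonneg (pow_nonneg h1t k)]
        have : (1 - t) ^ k ≤ (1 - d) ^ k := pow_le_pow_left₀ h1t (by linarith [ht.1]) k
        exact mul_le_mul_of_nonneg_left this (Real.rpow_nonneg ht0.le _)
      · exact (intervalIntegral.intervalIntegrable_rpow'
          (by linarith : (-1:ℝ) < b - 1)).mul_continuousOn continuousOn_const
    have heq : ∫ p in d..(1:ℝ), p ^ (b - 1) * (1 - d) ^ k
        = (∫ p in d..(1:ℝ), p ^ (b - 1)) * (1 - d) ^ k := intervalIntegral.integral_mul_const _ _
    have hnn : 0 ≤ ∫ p in d..(1:ℝ), p ^ (b - 1) :=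
      intervalIntegral.integral_nonneg hd01 (fun u hu => Real.rpow_nonneg (hd0.le.trans hu.1) _)
    rw [norm_mul, Real.norm_eq_abs, Real.norm_eq_abs,
      abs_of_nonneg (Real.rpow_nonneg (Nat.cast_nonneg k) b)]
    calc (k:ℝ) ^ b * |∫ p in d..(1:ℝ), p ^ (b - 1) * (1 - p) ^ k|
        ≤ (k:ℝ) ^ b * |∫ p in d..(1:ℝ), p ^ (b - 1) * (1 - d) ^ k| := by
          exact mul_le_mul_of_nonneg_left hb1 (Real.rpow_nonneg (Nat.cast_nonneg k) b)
      _ = (∫ p in d..(1:ℝ), p ^ (b - 1)) * ((k:ℝ) ^ b * (1 - d) ^ k) := by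
          rw [heq, abs_of_nonneg (mul_nonneg hnn (pow_nonneg (by linarith) k))]; ring
  -- T3 : error term
  have T3 : Tendsto (fun k : ℕ => (k:ℝ) ^ b * ∫ p in (0:ℝ)..d, (1 - p) ^ k * (f p - C * p ^ (b - 1)))
      atTop (nhds 0) := by
    have hlim : Tendsto (fun k : ℕ =>
        K * (k:ℝ) ^ (-θ) * ((k:ℝ) ^ (b + θ) * ∫ p in (0:ℝ)..1, p ^ (b + θ - 1) * (1 - p) ^ k))
        atTop (nhds (K * 0 * Real.Gamma (b + θ))) := by
      exact (tendsto_const_nhds.mul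
        ((tendsto_rpow_neg_atTop hθ).comp tendsto_natCast_atTop_atTop)).mul (lemA (by linarith))
    rw [show K * 0 * Real.Gamma (b + θ) = 0 by ring] at hlim
    apply squeeze_zero_norm' _ hlim
    filter_upwards [eventually_ge_atTop 1] with k hk
    have hk0 : (0:ℝ) < (k:ℝ) := by exact_mod_cast hk
    have hb1 : ‖∫ p in (0:ℝ)..d, (1 - p) ^ k * (f p - C * p ^ (b - 1))‖
        ≤ |∫ p in (0:ℝ)..d, K * (p ^ (b + θ - 1) * (1 - p) ^ k)| := by
      apply intervalIntegral.norm_integral_le_abs_of_norm_le _ (hG k)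
      rw [MeasureTheory.ae_restrict_iff' measurableSet_uIoc]
      filter_upwards [] with t ht
      rw [Set.uIoc_of_le hd0.le] at ht
      have ht0 : 0 < t := ht.1
      have h1t : 0 ≤ 1 - t := by linarith [le_trans ht.2 hd01]
      rw [norm_mul, Real.norm_eq_abs, Real.norm_eq_abs, abs_of_nonneg (pow_nonneg h1t k)]
      have htail := hf_tail t ht0 (lt_of_le_of_lt ht.2 hdδ)
      calc (1 - t) ^ k * |f t - C * t ^ (b - 1)|
          ≤ (1 - t) ^ k * (K * t ^ (b - 1 + θ)) :=
            mul_le_mul_of_nonneg_left htail (pow_nonneg h1t k)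
        _ = K * (t ^ (b + θ - 1) * (1 - t) ^ k) := by
            rw [show b - 1 + θ = b + θ - 1 by ring]; ring
    have hInn : 0 ≤ ∫ p in (0:ℝ)..d, K * (p ^ (b + θ - 1) * (1 - p) ^ k) := by
      apply intervalIntegral.integral_nonneg hd0.le
      intro u hu
      have h1u : 0 ≤ 1 - u := by linarith [le_trans hu.2 hd01]
      exact mul_nonneg hK.le (mul_nonneg (Real.rpow_nonneg hu.1 _) (pow_nonneg h1u k))
    have hmono : ∫ p in (0:ℝ)..d, K * (p ^ (b + θ - 1) * (1 - p) ^ k)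
        ≤ K * ∫ p in (0:ℝ)..1, p ^ (b + θ - 1) * (1 - p) ^ k := by
      rw [intervalIntegral.integral_const_mul]
      apply mul_le_mul_of_nonneg_left _ hK.le
      have hsplit := intervalIntegral.integral_add_adjacent_intervals
        ((hJ (b + θ) (by linarith) k).mono_set hsub1) ((hJ (b + θ) (by linarith) k).mono_set hsub2)
      have htail : 0 ≤ ∫ p in d..(1:ℝ), p ^ (b + θ - 1) * (1 - p) ^ k := by
        apply intervalIntegral.integral_nonneg hd01
        intro u hu
        have hu0 : 0 ≤ u := hd0.le.trans hu.1
        have h1u : 0 ≤ 1 - u := by linarith [hu.2]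
        exact mul_nonneg (Real.rpow_nonneg hu0 _) (pow_nonneg h1u k)
      linarith [hsplit]
    have hknn : 0 ≤ (k:ℝ) ^ b := Real.rpow_nonneg (Nat.cast_nonneg k) b
    rw [norm_mul, Real.norm_eq_abs, Real.norm_eq_abs, abs_of_nonneg hknn]
    calc (k:ℝ) ^ b * ‖∫ p in (0:ℝ)..d, (1 - p) ^ k * (f p - C * p ^ (b - 1))‖
        ≤ (k:ℝ) ^ b * (K * ∫ p in (0:ℝ)..1, p ^ (b + θ - 1) * (1 - p) ^ k) := by
          apply mul_le_mul_of_nonneg_left _ hknn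
          exact le_trans hb1 (le_trans (le_of_eq (abs_of_nonneg hInn)) hmono)
      _ = K * (k:ℝ) ^ (-θ) * ((k:ℝ) ^ (b + θ) * ∫ p in (0:ℝ)..1, p ^ (b + θ - 1) * (1 - p) ^ k) := by
          rw [show (k:ℝ) ^ b = (k:ℝ) ^ (-θ) * (k:ℝ) ^ (b + θ) by
            rw [← Real.rpow_add hk0]; congr 1; ring]
          ring
  -- T4 : tail of f integral
  have T4 : Tendsto (fun k : ℕ => (k:ℝ) ^ b * ∫ p in d..(1:ℝ), (1 - p) ^ k * f p)
      atTop (nhds 0) := by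
    have hg := geom_poly (b := b) (by linarith : (0:ℝ) ≤ 1 - d) (by linarith : (1:ℝ) - d < 1)
    apply squeeze_zero_norm' _ hg
    filter_upwards [] with k
    have hknn : 0 ≤ (k:ℝ) ^ b := Real.rpow_nonneg (Nat.cast_nonneg k) b
    have hb1 : ‖∫ p in d..(1:ℝ), (1 - p) ^ k * f p‖
        ≤ |∫ p in d..(1:ℝ), (1 - d) ^ k * f p| := by
      apply intervalIntegral.norm_integral_le_abs_of_norm_le _ (hfid1.const_mul _)
      rw [MeasureTheory.ae_restrict_iff' measurableSet_uIoc]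
      filter_upwards [] with t ht
      rw [Set.uIoc_of_le hd01] at ht
      have h1t : 0 ≤ 1 - t := by linarith [ht.2]
      have hft : 0 ≤ f t := hf_nonneg' t ⟨ht.1.le, ht.2⟩
      rw [norm_mul, Real.norm_eq_abs, Real.norm_eq_abs, abs_of_nonneg (pow_nonneg h1t k),
        abs_of_nonneg hft]
      exact mul_le_mul_of_nonneg_right (pow_le_pow_left₀ h1t (by linarith [ht.1]) k) hft
    have heq : ∫ p in d..(1:ℝ), (1 - d) ^ k * f p = (1 - d) ^ k * ∫ p in d..(1:ℝ), f p :=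
      intervalIntegral.integral_const_mul _ _
    have hfd1nn : 0 ≤ ∫ p in d..(1:ℝ), f p :=
      intervalIntegral.integral_nonneg hd01 (fun u hu => hf_nonneg' u hu)
    have hf0dnn : 0 ≤ ∫ p in (0:ℝ)..d, f p :=
      intervalIntegral.integral_nonneg hd0.le
        (fun u hu => hf_nonneg u ⟨hu.1, hu.2.trans hd01⟩)
    have hfd1le : ∫ p in d..(1:ℝ), f p ≤ 1 := by
      have hsplit := intervalIntegral.integral_add_adjacent_intervals hfi0d hfid1
      rw [hf_prob] at hsplit
      linarith
    rw [norm_mul, Real.norm_eq_abs, Real.norm_eq_abs, abs_of_nonneg hknn]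
    calc (k:ℝ) ^ b * |∫ p in d..(1:ℝ), (1 - p) ^ k * f p|
        ≤ (k:ℝ) ^ b * ((1 - d) ^ k * ∫ p in d..(1:ℝ), f p) := by
          apply mul_le_mul_of_nonneg_left _ hknn
          refine le_trans hb1 ?_
          rw [heq, abs_of_nonneg (mul_nonneg (pow_nonneg (by linarith) k) hfd1nn)]
      _ ≤ (k:ℝ) ^ b * ((1 - d) ^ k * 1) := by
          apply mul_le_mul_of_nonneg_left _ hknn
          exact mul_le_mul_of_nonneg_left hfd1le (pow_nonneg (by linarith) k)
      _ = (k:ℝ) ^ b * (1 - d) ^ k := by ring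
  -- assemble
  have key := ((T3.add T1).sub T2).add T4
  rw [show (0 + C * Real.Gamma b - C * 0 + 0 : ℝ) = C * Real.Gamma b by ring] at key
  apply key.congr
  intro k
  have e1 := intervalIntegral.integral_add_adjacent_intervals (hF0d k) (hFd1 k)
  have e2 := intervalIntegral.integral_add_adjacent_intervals (hJ0d k) (hJd1 k)
  have e3 : ∫ p in (0:ℝ)..d, (1 - p) ^ k * f p
      = (∫ p in (0:ℝ)..d, (1 - p) ^ k * (f p - C * p ^ (b - 1)))
        + C * ∫ p in (0:ℝ)..d, p ^ (b - 1) * (1 - p) ^ k := by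
    rw [← intervalIntegral.integral_const_mul,
      ← intervalIntegral.integral_add (hE0d k) ((hJ0d k).const_mul C)]
    apply intervalIntegral.integral_congr
    intro x _
    ring
  rw [← e1, ← e2, e3]
  ring

lemma final_combine {A : ℕ → ℝ} {L b : ℝ} (hL : 0 < L) (hb : 0 < b)
    (hmain : Tendsto (fun k : ℕ => (k : ℝ) ^ b * A k) atTop (nhds L)) :
    Tendsto (fun k : ℕ => -Real.log (1 - A k) / (L * (k : ℝ) ^ (-b))) atTop (nhds 1) := by
  have hA0 : Tendsto A atTop (nhds 0) := by
    have h := hmain.mul ((tendsto_rpow_neg_atTop hb).comp tendsto_natCast_atTop_atTop)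
    rw [mul_zero] at h
    refine h.congr' ?_
    filter_upwards [eventually_ge_atTop 1] with k hk
    have hk0 : (0:ℝ) < (k:ℝ) := by exact_mod_cast hk
    have h1 : (k:ℝ) ^ b * (k:ℝ) ^ (-b) = 1 := by rw [← Real.rpow_add hk0]; simp
    show ((k:ℝ) ^ b * A k) * ((k:ℝ) ^ (-b)) = A k
    calc ((k:ℝ) ^ b * A k) * ((k:ℝ) ^ (-b)) = ((k:ℝ) ^ b * (k:ℝ) ^ (-b)) * A k := by ring
      _ = A k := by rw [h1]; ring
  have hApos : ∀ᶠ k : ℕ in atTop, 0 < A k := by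
    filter_upwards [hmain.eventually_const_lt hL, eventually_ge_atTop 1] with k h1 h2
    have hk0 : (0:ℝ) < (k:ℝ) ^ b := Real.rpow_pos_of_pos (by exact_mod_cast h2) b
    rcases mul_pos_iff.mp h1 with h | h
    · exact h.2
    · exact absurd h.1 (not_lt.mpr hk0.le)
  have hder : HasDerivAt (fun x : ℝ => Real.log (1 - x)) (-1) 0 := by
    have h1 : HasDerivAt (fun x : ℝ => 1 - x) (-1) 0 := (hasDerivAt_id 0).const_sub 1
    have := h1.log (by norm_num)
    simpa using this
  have hslope := hasDerivAt_iff_tendsto_slope.mp hder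
  have hA_ne : Tendsto A atTop (nhdsWithin 0 {(0:ℝ)}ᶜ) := by
    rw [tendsto_nhdsWithin_iff]
    exact ⟨hA0, hApos.mono fun k hk => ne_of_gt hk⟩
  have hlog : Tendsto (fun k : ℕ => Real.log (1 - A k) / A k) atTop (nhds (-1)) := by
    refine (hslope.comp hA_ne).congr fun k => ?_
    simp [slope_def_field, Function.comp]
  have hfinal := (hlog.neg).mul (hmain.mul (tendsto_const_nhds (x := L⁻¹)))
  rw [show -(-1 : ℝ) * (L * L⁻¹) = 1 by field_simp] at hfinal
  refine hfinal.congr' ?_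
  filter_upwards [hApos, eventually_ge_atTop 1] with k hAk hk1
  have hk0 : (0:ℝ) < (k:ℝ) := by exact_mod_cast hk1
  have hkb : (k:ℝ) ^ b ≠ 0 := (Real.rpow_pos_of_pos hk0 b).ne'
  have hAne : A k ≠ 0 := hAk.ne'
  show -(Real.log (1 - A k) / A k) * ((k:ℝ) ^ b * A k * L⁻¹)
      = -Real.log (1 - A k) / (L * (k:ℝ) ^ (-b))
  rw [Real.rpow_neg hk0.le]
  field_simp

/-- **Sufficiency of a power-law left tail in the distribution of single-attempt
success rates.** If a probability density `f` on `[0,1]` satisfies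
`f(p) = C·p^(b-1) + O(p^(b-1+θ))` near `0`, then
`-log(pass_D@k) ~ C·Γ(b)·k^(-b)` as `k → ∞`, where
`pass_D@k = 1 - ∫₀¹ (1-p)^k f(p) dp`. -/
theorem neg_log_pass_asymptotic_power_law
    (f : ℝ → ℝ)
    (hf_nonneg : ∀ p ∈ Set.Icc (0:ℝ) 1, 0 ≤ f p)
    (hf_int : IntervalIntegrable f volume 0 1)
    (hf_prob : (∫ p in (0:ℝ)..1, f p) = 1)
    (b C θ K δ : ℝ)
    (hb : 0 < b) (hC : 0 < C) (hθ : 0 < θ) (hK : 0 < K) (hδ : 0 < δ)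
    (hf_tail : ∀ p : ℝ, 0 < p → p < δ → |f p - C * p ^ (b - 1)| ≤ K * p ^ (b - 1 + θ)) :
    Tendsto
      (fun k : ℕ =>
        (-Real.log (1 - ∫ p in (0:ℝ)..1, (1 - p) ^ k * f p)) /
          (C * Real.Gamma b * (k : ℝ) ^ (-b)))
      atTop (nhds 1) := by
  exact final_combine (A := fun k : ℕ => ∫ p in (0:ℝ)..1, (1 - p) ^ k * f p)
    (mul_pos hC (Real.Gamma_pos_of_pos hb)) hb
    (lemC f hf_nonneg hf_int hf_prob b C θ K δ hb hC hθ hK hδ hf_tail)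
end

section
/- Let 0 < α < β ≤ 1 and let pass_D@k := 1 − (1/(β−α))·∫_α^β (1−p)^k dp be the aggregate success rate when per-attempt success probabilities are uniform on [α, β]. Then −log(pass_D@k) is asymptotically equivalent to (1−α)^(k+1) / ((β−α)·(k+1)) as k → ∞; in particular −log(pass_D@k) decays exponentially fast in k, faster than any power law. -/
open MeasureTheory Real Filter

/-- **Uniform distribution with `α > 0`: exponential decay.** If per-attempt
success probabilities are uniform on `[α, β]` with `0 < α < β ≤ 1`, then
`-log(pass_D@k) ~ (1-α)^(k+1) / ((β-α)·(k+1))` as `k → ∞`; in particular the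
negative log aggregate success rate decays exponentially fast in `k`. -/
theorem neg_log_pass_uniform_pos_left_endpoint
    (α β : ℝ) (hα : 0 < α) (hαβ : α < β) (hβ : β ≤ 1) :
    Tendsto
      (fun k : ℕ =>
        (-Real.log (1 - (1 / (β - α)) * ∫ p in α..β, (1 - p) ^ k)) /
          ((1 - α) ^ (k + 1) / ((β - α) * (k + 1))))
      atTop (nhds 1) := by
  have hβα : 0 < β - α := by linarith
  set r : ℝ := 1 - α with hrdef
  set s : ℝ := 1 - β with hsdef
  have hr0 : 0 < r := by simp only [hrdef]; linarith
  have hr1 : r < 1 := by simp only [hrdef]; linarith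
  have hs0 : 0 ≤ s := by simp only [hsdef]; linarith
  have hsr : s < r := by simp only [hrdef, hsdef]; linarith
  set a : ℕ → ℝ := fun k => (r ^ (k+1) - s ^ (k+1)) / ((β - α) * ((k:ℝ)+1)) with hadef
  set b : ℕ → ℝ := fun k => r ^ (k+1) / ((β - α) * ((k:ℝ)+1)) with hbdef
  have hk1 : ∀ k : ℕ, (0:ℝ) < (k:ℝ) + 1 := fun k => by positivity
  have hint : ∀ k : ℕ, (∫ p in α..β, (1 - p) ^ k) = (r ^ (k+1) - s ^ (k+1)) / ((k:ℝ)+1) := by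
    intro k
    rw [show (fun p : ℝ => (1 - p) ^ k) = (fun p => (fun x : ℝ => x ^ k) (1 - p)) from rfl]
    rw [intervalIntegral.integral_comp_sub_left (fun x : ℝ => x ^ k) 1, integral_pow]
  have hexpr : ∀ k : ℕ, 1 - (1 / (β - α)) * ∫ p in α..β, (1 - p) ^ k = 1 - a k := by
    intro k
    rw [hint k]
    simp only [hadef]
    field_simp
  have hapos : ∀ k : ℕ, 0 < a k := by
    intro k
    apply div_pos _ (mul_pos hβα (hk1 k))
    have h : s ^ (k+1) < r ^ (k+1) := pow_lt_pow_left₀ hsr hs0 (by omega)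
    linarith
  have ha0 : Tendsto a atTop (nhds 0) := by
    apply squeeze_zero (fun k => (hapos k).le) (g := fun k => r ^ (k+1) / (β - α))
    · intro k
      simp only [hadef]
      rw [div_le_div_iff₀ (mul_pos hβα (hk1 k)) hβα]
      have h1 : s ^ (k+1) ≥ 0 := pow_nonneg hs0 _
      have h3 : 0 ≤ (k:ℝ) * (r ^ (k+1) * (β - α)) :=
        mul_nonneg (Nat.cast_nonneg k) (mul_pos (pow_pos hr0 (k+1)) hβα).le
      nlinarith [pow_pos hr0 (k+1)]
    · have : Tendsto (fun k : ℕ => r ^ (k+1)) atTop (nhds 0) := by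
        have := tendsto_pow_atTop_nhds_zero_of_lt_one hr0.le hr1
        exact this.comp (tendsto_add_atTop_nat 1)
      simpa using this.div_const (β - α)
  have hslope : Tendsto (fun k => (-Real.log (1 - a k)) / a k) atTop (nhds 1) := by
    have h1 : HasDerivAt (fun x : ℝ => 1 - x) (-1) 0 := by
      simpa using (hasDerivAt_id (0:ℝ)).const_sub 1
    have h2 : HasDerivAt (fun x : ℝ => -Real.log (1 - x)) 1 0 := by
      have := (h1.log (by norm_num)).neg
      exact (by simpa using this : HasDerivAt (-fun y => Real.log (1 - y)) 1 0)
    rw [hasDerivAt_iff_tendsto_slope] at h2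
    have hmem : Tendsto a atTop (nhdsWithin 0 {(0:ℝ)}ᶜ) :=
      tendsto_nhdsWithin_of_tendsto_nhds_of_eventually_within a ha0
        (Eventually.of_forall fun k => (hapos k).ne')
    have := h2.comp hmem
    refine this.congr fun k => ?_
    simp [slope_def_field, Function.comp, div_eq_div_iff]
  have hc : Tendsto (fun k => a k / b k) atTop (nhds 1) := by
    have heq : ∀ k : ℕ, a k / b k = 1 - (s / r) ^ (k+1) := by
      intro k
      have hD : (β - α) * ((k:ℝ)+1) ≠ 0 := (mul_pos hβα (hk1 k)).ne'
      have hY : r ^ (k+1) ≠ 0 := (pow_pos hr0 _).ne'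
      simp only [hadef, hbdef]
      field_simp
      rw [mul_sub, mul_one, div_pow, mul_div_cancel₀ _ hY]
    have h2 : Tendsto (fun k : ℕ => (s/r) ^ (k+1)) atTop (nhds 0) := by
      have := tendsto_pow_atTop_nhds_zero_of_lt_one (by positivity)
        ((div_lt_one hr0).mpr hsr)
      exact this.comp (tendsto_add_atTop_nat 1)
    have := (tendsto_const_nhds (x := (1:ℝ)) (f := atTop)).sub h2
    simp only [sub_zero] at this
    exact this.congr fun k => (heq k).symm
  have hmain := hslope.mul hc
  rw [one_mul] at hmain
  refine hmain.congr fun k => ?_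
  rw [hexpr k]
  rw [div_mul_div_comm, mul_comm (a k) (b k), mul_div_mul_right _ _ (hapos k).ne']
end

section
/- Let 0 < β ≤ 1 and let pass_D@k := 1 − (1/β)·∫₀^β (1−p)^k dp be the aggregate success rate when per-attempt success probabilities are uniform on [0, β]. Then −log(pass_D@k) is asymptotically equivalent to 1/(β·k) as k → ∞; that is, β·k·(−log(pass_D@k)) → 1 as k → ∞. In particular the negative log aggregate success rate follows a power law in k with exponent 1. -/
open MeasureTheory Real Filter

/-- **Uniform distribution on `[0, β]`: power law with exponent 1.** If
per-attempt success probabilities are uniform on `[0, β]` with `0 < β ≤ 1`,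
then `-log(pass_D@k) ~ 1/(β·k)` as `k → ∞`, i.e.
`β·k·(-log(pass_D@k)) → 1`. -/
theorem neg_log_pass_uniform_zero_left_endpoint
    (β : ℝ) (hβ0 : 0 < β) (hβ1 : β ≤ 1) :
    Tendsto
      (fun k : ℕ =>
        β * (k : ℝ) *
          (-Real.log (1 - (1 / β) * ∫ p in (0:ℝ)..β, (1 - p) ^ k)))
      atTop (nhds 1) := by
  have hβ : β ≠ 0 := ne_of_gt hβ0
  have hgeo : Tendsto (fun k : ℕ => (1-β)^(k+1)) atTop (nhds 0) :=
    (tendsto_pow_atTop_nhds_zero_of_lt_one (by linarith) (by linarith)).comp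
      (tendsto_add_atTop_nat 1)
  -- evaluate the integral
  have hint : ∀ k : ℕ, (∫ p in (0:ℝ)..β, (1 - p) ^ k)
      = (1 - (1-β)^(k+1)) / (k+1) := by
    intro k
    have h1 : (∫ p in (0:ℝ)..β, (1 - p) ^ k)
        = ∫ x in (1-β)..(1:ℝ), x ^ k := by
      simpa using intervalIntegral.integral_comp_sub_left (a := (0:ℝ)) (b := β)
        (fun x => x ^ k) 1
    rw [h1, integral_pow]
    norm_num
  set a : ℕ → ℝ := fun k => (1 - (1-β)^(k+1)) / (β*(k+1)) with ha
  have hpow_lt : ∀ k : ℕ, (1-β)^(k+1) < 1 := by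
    intro k
    exact pow_lt_one₀ (by linarith) (by linarith) (Nat.succ_ne_zero k)
  have hapos : ∀ k : ℕ, 0 < a k := by
    intro k
    apply div_pos (by linarith [hpow_lt k])
    positivity
  -- a → 0
  have halim : Tendsto a atTop (nhds 0) := by
    apply Tendsto.div_atTop (a := 1 - 0)
    · exact tendsto_const_nhds.sub hgeo
    · apply Tendsto.const_mul_atTop hβ0
      exact tendsto_atTop_add_const_right _ 1 tendsto_natCast_atTop_atTop
  -- slope of -log(1-x) at 0
  have hderiv : HasDerivAt (fun x : ℝ => -Real.log (1 - x)) 1 0 := by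
    have h1 : HasDerivAt (fun x : ℝ => (1 : ℝ) - x) (-1) 0 :=
      (hasDerivAt_id 0).const_sub 1
    have h2 : HasDerivAt (fun x : ℝ => Real.log (1 - x)) (-1) 0 := by
      have := (Real.hasDerivAt_log (by norm_num : (1:ℝ) - 0 ≠ 0)).comp 0 h1
      simpa [Function.comp_def] using this
    have h3 := h2.neg
    rwa [neg_neg] at h3
  have hslope : Tendsto (fun y : ℝ => (-Real.log (1 - y)) / y)
      (nhdsWithin 0 {(0:ℝ)}ᶜ) (nhds 1) := by
    have := hasDerivAt_iff_tendsto_slope.mp hderiv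
    refine this.congr' ?_
    filter_upwards [self_mem_nhdsWithin] with y hy
    simp [slope_def_field, div_eq_div_iff]
  have hane : Tendsto a atTop (nhdsWithin 0 {(0:ℝ)}ᶜ) := by
    rw [tendsto_nhdsWithin_iff]
    exact ⟨halim, Filter.Eventually.of_forall fun k => (ne_of_gt (hapos k))⟩
  have hf : Tendsto (fun k => (-Real.log (1 - a k)) / a k) atTop (nhds 1) :=
    hslope.comp hane
  -- second factor
  have hg : Tendsto (fun k : ℕ => β * k * a k) atTop (nhds 1) := by
    have heq : ∀ k : ℕ, β * k * a k = ((k:ℝ)/(k+1)) * (1 - (1-β)^(k+1)) := by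
      intro k
      have hk1 : ((k:ℝ)+1) ≠ 0 := by positivity
      simp only [ha]
      field_simp
    rw [show (1:ℝ) = 1 * 1 by norm_num]
    refine Tendsto.congr (fun k => (heq k).symm) (Tendsto.mul ?_ ?_)
    · exact tendsto_natCast_div_add_atTop 1
    · simpa using tendsto_const_nhds.sub hgeo
  have hmain : Tendsto (fun k : ℕ => β * k * (-Real.log (1 - a k))) atTop (nhds 1) := by
    have := hf.mul hg
    rw [one_mul] at this
    refine this.congr fun k => ?_
    have hak : a k ≠ 0 := ne_of_gt (hapos k)
    field_simp
  refine hmain.congr fun k => ?_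
  have : (1:ℝ) - (1 / β) * ∫ p in (0:ℝ)..β, (1 - p) ^ k = 1 - a k := by
    rw [hint k, ha]
    have hk1 : ((k:ℝ)+1) ≠ 0 := by positivity
    field_simp
  rw [this]
end

section
/- Let α > 0 and β > 0, and let p follow the Kumaraswamy(α, β) distribution with density f(x) = α·β·x^(α−1)·(1−x^α)^(β−1) on (0,1). Let pass_{Kumaraswamy(α,β)}@k := 1 − ∫₀¹ (1−x)^k f(x) dx. Then ∫₀¹ (1−x)^k f(x) dx = α·β·Γ(α)·k^(−α) + O(k^(−α−ε)) for some ε > 0, and consequently −log(pass_{Kumaraswamy(α,β)}@k) = α·β·Γ(α)·k^(−α) + o(k^(−α)) as k → ∞; in particular the negative log aggregate success rate follows a power law in k with exponent α. -/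
open MeasureTheory Real Filter

set_option maxHeartbeats 1000000
open Set intervalIntegral

namespace KumAux

/-- weighted AM-GM consequence -/
lemma one_sub_rpow_ge {α : ℝ} (hα : 0 < α) {x : ℝ} (hx0 : 0 ≤ x) (hx1 : x ≤ 1) :
    min α 1 * (1 - x) ≤ 1 - x ^ α := by
  rcases le_total α 1 with h | h
  · rw [min_eq_left h]
    have h2 := Real.geom_mean_le_arith_mean2_weighted hα.le (by linarith : (0:ℝ) ≤ 1 - α)
      hx0 zero_le_one (by ring)
    rw [Real.one_rpow, mul_one, mul_one] at h2
    nlinarith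
  · rw [min_eq_right h]
    have h2 : x ^ α ≤ x := by
      rcases eq_or_lt_of_le hx0 with rfl | hx0'
      · rw [Real.zero_rpow hα.ne']
      · calc x ^ α ≤ x ^ (1:ℝ) := Real.rpow_le_rpow_of_exponent_ge hx0' hx1 h
          _ = x := Real.rpow_one x
    nlinarith

lemma pow_beta_bound {α β : ℝ} (hα : 0 < α) (hβ : 0 < β) {x : ℝ} (hx0 : 0 ≤ x) (hx1 : x ≤ 1) :
    (1 - x ^ α) ^ (β - 1) ≤ max 1 ((min α 1) ^ (β - 1)) * (1 - x) ^ (min β 1 - 1) := by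
  have hxa0 : 0 ≤ x ^ α := Real.rpow_nonneg hx0 _
  have hxa1 : x ^ α ≤ 1 := Real.rpow_le_one hx0 hx1 hα.le
  have hm0 : 0 < min α 1 := lt_min hα one_pos
  rcases le_total 1 β with hb | hb
  · rw [min_eq_right hb, sub_self, Real.rpow_zero, mul_one]
    calc (1 - x ^ α) ^ (β - 1) ≤ 1 := Real.rpow_le_one (by linarith) (by linarith) (by linarith)
      _ ≤ _ := le_max_left _ _
  · rw [min_eq_left hb]
    rcases eq_or_lt_of_le hx1 with rfl | hx1'
    · rw [Real.one_rpow, sub_self]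
      exact le_mul_of_one_le_left (Real.rpow_nonneg le_rfl _) (le_max_left _ _)
    · have h1x : 0 < 1 - x := by linarith
      have key : min α 1 * (1 - x) ≤ 1 - x ^ α := one_sub_rpow_ge hα hx0 hx1
      have hpos : 0 < min α 1 * (1 - x) := mul_pos hm0 h1x
      calc (1 - x ^ α) ^ (β - 1) ≤ (min α 1 * (1 - x)) ^ (β - 1) :=
            Real.rpow_le_rpow_of_nonpos hpos key (by linarith)
        _ = (min α 1) ^ (β - 1) * (1 - x) ^ (β - 1) := Real.mul_rpow hm0.le h1x.le
        _ ≤ max 1 ((min α 1) ^ (β - 1)) * (1 - x) ^ (β - 1) := by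
            apply mul_le_mul_of_nonneg_right (le_max_right _ _) (Real.rpow_nonneg h1x.le _)


/-- Lipschitz-type bound for `y ↦ (1-y)^(β-1)` near 0. -/
lemma lipschitz_aux (β : ℝ) {q : ℝ} (hq0 : 0 ≤ q) (hq1 : q < 1) :
    ∃ L : ℝ, 0 ≤ L ∧ ∀ y ∈ Icc (0:ℝ) q, |(1 - y) ^ (β - 1) - 1| ≤ L * y := by
  set L : ℝ := |β - 1| * max ((1 - q) ^ (β - 2)) 1 with hL
  have hL0 : 0 ≤ L := mul_nonneg (abs_nonneg _)
    (le_trans zero_le_one (le_max_right _ _))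
  refine ⟨L, hL0, ?_⟩
  have hderiv : ∀ y ∈ Icc (0:ℝ) q,
      HasDerivWithinAt (fun z : ℝ => (1 - z) ^ (β - 1))
        (-((β - 1) * (1 - y) ^ (β - 2))) (Icc (0:ℝ) q) y := by
    intro y hy
    have h1y : (0:ℝ) < 1 - y := by
      have := hy.2; linarith
    have h1 : HasDerivAt (fun z : ℝ => z ^ (β - 1)) ((β - 1) * (1 - y) ^ (β - 1 - 1)) (1 - y) :=
      Real.hasDerivAt_rpow_const (Or.inl h1y.ne')
    have h2 : HasDerivAt (fun z : ℝ => 1 - z) (-1) y := by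
      simpa using (hasDerivAt_id y).const_sub 1
    have h3 := h1.comp y h2
    have : (β - 1) * (1 - y) ^ (β - 1 - 1) * (-1) = -((β - 1) * (1 - y) ^ (β - 2)) := by
      ring_nf
    rw [this] at h3
    exact h3.hasDerivWithinAt
  have hbound : ∀ y ∈ Icc (0:ℝ) q, ‖-((β - 1) * (1 - y) ^ (β - 2))‖ ≤ L := by
    intro y hy
    have h1y : (0:ℝ) < 1 - y := by have := hy.2; linarith
    have h1q : (0:ℝ) < 1 - q := by linarith
    have hyq : 1 - q ≤ 1 - y := by have := hy.2; linarith
    have hpow : (1 - y) ^ (β - 2) ≤ max ((1 - q) ^ (β - 2)) 1 := by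
      rcases le_total 0 (β - 2) with h | h
      · exact le_trans (Real.rpow_le_one h1y.le (by have := hy.1; linarith) h) (le_max_right _ _)
      · exact le_trans (Real.rpow_le_rpow_of_nonpos h1q hyq h) (le_max_left _ _)
    rw [norm_neg, norm_mul, Real.norm_eq_abs, Real.norm_eq_abs,
      abs_of_nonneg (Real.rpow_nonneg h1y.le _)]
    exact mul_le_mul_of_nonneg_left hpow (abs_nonneg _)
  intro y hy
  have h0 : (0:ℝ) ∈ Icc (0:ℝ) q := ⟨le_rfl, hq0⟩
  have h := (convex_Icc (0:ℝ) q).norm_image_sub_le_of_norm_hasDerivWithin_le hderiv hbound h0 hy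
  simp only [sub_zero, Real.one_rpow, Real.norm_eq_abs, abs_of_nonneg hy.1] at h
  exact h

lemma pow_le_exp_neg (k : ℕ) {x : ℝ} (hx0 : 0 ≤ x) (hx1 : x ≤ 1) :
    (1 - x) ^ k ≤ exp (-((k:ℝ) * x)) := by
  have h1 : (0:ℝ) ≤ 1 - x := by linarith
  calc (1 - x) ^ k ≤ (exp (-x)) ^ k := pow_le_pow_left₀ h1 (Real.one_sub_le_exp_neg x) k
    _ = exp (-((k:ℝ) * x)) := by rw [← Real.exp_nat_mul]; ring_nf

lemma exp_sub_pow_le (k : ℕ) {x : ℝ} (hx0 : 0 ≤ x) (hx : x ≤ 1/2) :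
    exp (-((k:ℝ) * x)) - (1 - x) ^ k ≤ 2 * k * x ^ 2 * exp (-((k:ℝ) * x)) := by
  have hx1 : |x| < 1 := by rw [abs_of_nonneg hx0]; linarith
  have hlog := Real.abs_log_sub_add_sum_range_le hx1 1
  simp only [Finset.range_one, Finset.sum_singleton, pow_one, Nat.cast_one, pow_succ,
    Nat.cast_ofNat] at hlog
  rw [abs_of_nonneg hx0] at hlog
  have hden : 1 - x ≥ 1/2 := by linarith
  have hlog2 : -(x + 2 * x ^ 2) ≤ Real.log (1 - x) := by
    have h2 : |x + Real.log (1 - x)| ≤ x * x / (1 - x) := by simpa using hlog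
    have h3 : x * x / (1 - x) ≤ 2 * x ^ 2 := by
      rw [div_le_iff₀ (by linarith : (0:ℝ) < 1 - x)]
      nlinarith
    have h4 := (abs_le.mp h2).1
    nlinarith
  have h1x : (0:ℝ) < 1 - x := by linarith
  have hpow : exp (-((k:ℝ) * x)) * (1 - 2 * k * x ^ 2) ≤ (1 - x) ^ k := by
    have e1 : (1 - x) ^ k = exp ((k:ℝ) * Real.log (1 - x)) := by
      rw [Real.exp_nat_mul, Real.exp_log h1x]
    rw [e1]
    have e2 : exp (-((k:ℝ) * x)) * (1 - 2 * k * x ^ 2)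
        ≤ exp (-((k:ℝ) * x)) * exp (-(2 * k * x ^ 2)) := by
      apply mul_le_mul_of_nonneg_left (Real.one_sub_le_exp_neg _) (exp_nonneg _)
    refine e2.trans ?_
    rw [← Real.exp_add]
    apply Real.exp_le_exp.mpr
    have hk0 : (0:ℝ) ≤ (k:ℝ) := Nat.cast_nonneg k
    nlinarith [mul_le_mul_of_nonneg_left hlog2 hk0]
  nlinarith [exp_nonneg (-((k:ℝ) * x))]

lemma gamma_int {a : ℝ} (ha : 0 < a) {r : ℝ} (hr : 0 < r) :
    ∫ t in Ioi (0:ℝ), t ^ (a - 1) * exp (-(r * t)) = Real.Gamma a * r ^ (-a) := by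
  rw [Real.integral_rpow_mul_exp_neg_mul_Ioi ha hr, one_div, ← Real.rpow_neg_one r,
    ← Real.rpow_mul hr.le, neg_one_mul, mul_comm]

lemma gamma_integrable {a : ℝ} (ha : 0 < a) {r : ℝ} (hr : 0 < r) :
    IntegrableOn (fun t : ℝ => t ^ (a - 1) * exp (-(r * t))) (Ioi (0:ℝ)) := by
  have h := integrableOn_rpow_mul_exp_neg_mul_rpow (p := 1) (s := a - 1) (b := r)
    (by linarith) one_pos hr
  refine h.congr_fun (fun x hx => ?_) measurableSet_Ioi
  beta_reduce
  rw [Real.rpow_one, neg_mul]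


lemma geom_eventually_le {r : ℝ} (hr0 : 0 ≤ r) (hr1 : r < 1) {c : ℝ} (hc : 0 < c) :
    ∀ᶠ k : ℕ in atTop, r ^ k ≤ (k:ℝ) ^ (-c) := by
  rcases eq_or_lt_of_le hr0 with rfl | hr
  · filter_upwards [eventually_ge_atTop 1] with k hk
    rw [zero_pow (by omega)]
    positivity
  · have hinv : 1 < r⁻¹ := (one_lt_inv₀ hr).mpr hr1
    have hlo := isLittleO_pow_const_const_pow_of_one_lt (R := ℝ) ⌈c⌉₊ hinv
    filter_upwards [hlo.def one_pos, eventually_ge_atTop 1] with k hk hk1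
    have hk0 : (1:ℝ) ≤ (k:ℝ) := by exact_mod_cast hk1
    have hkc : 0 < (k:ℝ) ^ c := Real.rpow_pos_of_pos (by linarith) c
    rw [one_mul, Real.norm_eq_abs, Real.norm_eq_abs,
      abs_of_nonneg (by positivity), abs_of_nonneg (by positivity)] at hk
    have h1 : (k:ℝ) ^ c ≤ (k:ℝ) ^ (⌈c⌉₊:ℕ) := by
      rw [← Real.rpow_natCast (k:ℝ) ⌈c⌉₊]
      exact Real.rpow_le_rpow_of_exponent_le hk0 (Nat.le_ceil c)
    have h2 : (k:ℝ) ^ c ≤ r⁻¹ ^ k := h1.trans hk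
    rw [Real.rpow_neg (Nat.cast_nonneg k), ← one_div, le_div_iff₀ hkc]
    calc r ^ k * (k:ℝ) ^ c ≤ r ^ k * r⁻¹ ^ k := by
          exact mul_le_mul_of_nonneg_left h2 (pow_nonneg hr.le k)
      _ = 1 := by rw [← mul_pow, mul_inv_cancel₀ hr.ne', one_pow]

lemma key {α β : ℝ} (hα : 0 < α) (hβ : 0 < β) : ∃ C, 0 < C ∧ ∀ k : ℕ, 1 ≤ k →
    |(∫ x in (0:ℝ)..1, (1 - x) ^ k * (x ^ (α - 1) * (1 - x ^ α) ^ (β - 1)))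
        - Real.Gamma α * (k:ℝ) ^ (-α)|
      ≤ C * ((k:ℝ) ^ (-(α + min α 1)) + (2:ℝ)⁻¹ ^ k + (exp (-2⁻¹)) ^ k) := by
  -- constants
  set q : ℝ := (2:ℝ)⁻¹ ^ α with hq
  have hq0 : 0 < q := Real.rpow_pos_of_pos (by norm_num) α
  have hq1 : q < 1 := Real.rpow_lt_one (by norm_num) (by norm_num) hα
  obtain ⟨L, hL0, hLip⟩ := lipschitz_aux β hq0.le hq1
  set K : ℝ := max 1 ((min α 1) ^ (β - 1)) with hK
  have hK1 : (1:ℝ) ≤ K := le_max_left _ _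
  set b' : ℝ := min β 1 with hb'
  have hb'0 : 0 < b' := lt_min hβ one_pos
  have hb'1 : b' ≤ 1 := min_le_right _ _
  set C₁ : ℝ := max 1 ((2:ℝ)⁻¹ ^ (α - 1)) with hC₁
  have hC₁1 : (1:ℝ) ≤ C₁ := le_max_left _ _
  have hxC₁ : ∀ x ∈ Icc ((2:ℝ)⁻¹) 1, x ^ (α - 1) ≤ C₁ := by
    intro x hx
    rcases le_total 0 (α - 1) with h | h
    · exact le_trans (Real.rpow_le_one (by linarith [hx.1]) hx.2 h) hC₁1
    · exact le_trans (Real.rpow_le_rpow_of_nonpos (by norm_num) hx.1 h) (le_max_right _ _)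
  -- the beta-type integral on [1/2,1]
  set Ib : ℝ := ∫ x in ((2:ℝ)⁻¹)..1, (1 - x) ^ (b' - 1) with hIb
  have hIIb : IntervalIntegrable (fun x : ℝ => (1 - x) ^ (b' - 1)) volume ((2:ℝ)⁻¹) 1 := by
    have h := (intervalIntegrable_rpow' (a := 0) (b := (2:ℝ)⁻¹)
      (by linarith : (-1:ℝ) < b' - 1)).comp_sub_left 1
    norm_num at h
    have he : (2:ℝ)⁻¹ = 1/2 := by norm_num
    rw [he]
    exact h.symm
  have hIb0 : 0 ≤ Ib := intervalIntegral.integral_nonneg (by norm_num)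
    (fun u hu => Real.rpow_nonneg (by linarith [hu.2]) _)
  -- final constant
  refine ⟨C₁ * K * Ib + L * Real.Gamma (2*α) + 2 * Real.Gamma (α+2)
      + Real.Gamma α * exp 2⁻¹ + 1, ?_, ?_⟩
  · have h1 : 0 ≤ C₁ * K * Ib := by positivity
    have h2 : 0 ≤ L * Real.Gamma (2*α) :=
      mul_nonneg hL0 (Real.Gamma_nonneg_of_nonneg (by linarith))
    have h3 : (0:ℝ) ≤ 2 * Real.Gamma (α+2) :=
      mul_nonneg (by norm_num) (Real.Gamma_nonneg_of_nonneg (by linarith))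
    have h4 : 0 ≤ Real.Gamma α * exp 2⁻¹ :=
      mul_nonneg (Real.Gamma_nonneg_of_nonneg hα.le) (exp_nonneg _)
    linarith
  intro k hk
  set κ : ℝ := (k:ℝ) with hκ
  have hκ1 : (1:ℝ) ≤ κ := by rw [hκ]; exact_mod_cast hk
  have hκ0 : (0:ℝ) < κ := by linarith
  set F : ℝ → ℝ := fun x => (1 - x) ^ k * (x ^ (α - 1) * (1 - x ^ α) ^ (β - 1)) with hF
  have hFmeas : Measurable F := by fun_prop
  -- pointwise facts on (0, 1]
  have hFbd1 : ∀ x ∈ Ioc (0:ℝ) (2:ℝ)⁻¹, F x ∈ Icc 0 ((1 + L * q) * x ^ (α - 1)) := by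
    intro x hx
    have hx0 : 0 < x := hx.1
    have hx2 : x ≤ (2:ℝ)⁻¹ := hx.2
    have hx1 : x ≤ 1 := by linarith
    have hxa1 : x ^ α ≤ 1 := Real.rpow_le_one hx0.le hx1 hα.le
    have hxa0 : 0 ≤ x ^ α := Real.rpow_nonneg hx0.le _
    have hyq : x ^ α ≤ q := Real.rpow_le_rpow hx0.le hx2 hα.le
    have hlip := hLip (x ^ α) ⟨hxa0, hyq⟩
    have h1 : (1 - x ^ α) ^ (β - 1) ≤ 1 + L * q := by
      have := (abs_le.mp hlip).2
      nlinarith [mul_le_mul_of_nonneg_left hyq hL0]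
    have hp1 : (1 - x) ^ k ≤ 1 := pow_le_one₀ (by linarith) (by linarith)
    have hp0 : (0:ℝ) ≤ (1 - x) ^ k := pow_nonneg (by linarith) k
    have hr0 : (0:ℝ) ≤ x ^ (α - 1) := Real.rpow_nonneg hx0.le _
    have hs0 : (0:ℝ) ≤ (1 - x ^ α) ^ (β - 1) := Real.rpow_nonneg (by linarith) _
    constructor
    · positivity
    · calc F x ≤ 1 * (x ^ (α - 1) * (1 + L * q)) := by
            apply mul_le_mul hp1 (mul_le_mul_of_nonneg_left h1 hr0) (by positivity) zero_le_one
        _ = (1 + L * q) * x ^ (α - 1) := by ring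
  have hFbd2 : ∀ x ∈ Icc ((2:ℝ)⁻¹) 1, F x ∈ Icc 0 ((2:ℝ)⁻¹ ^ k * (C₁ * K * (1 - x) ^ (b' - 1))) := by
    intro x hx
    have hx0 : (0:ℝ) < x := lt_of_lt_of_le (by norm_num) hx.1
    have hx1 : x ≤ 1 := hx.2
    have h1x0 : (0:ℝ) ≤ 1 - x := by linarith
    have h1x2 : 1 - x ≤ (2:ℝ)⁻¹ := by
      have := hx.1; norm_num at this ⊢; linarith
    have hxa1 : x ^ α ≤ 1 := Real.rpow_le_one hx0.le hx1 hα.le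
    have hp : (1 - x) ^ k ≤ (2:ℝ)⁻¹ ^ k := pow_le_pow_left₀ h1x0 h1x2 k
    have hbb := pow_beta_bound hα hβ hx0.le hx1
    rw [← hK, ← hb'] at hbb
    have hr0 : (0:ℝ) ≤ x ^ (α - 1) := Real.rpow_nonneg hx0.le _
    have hs0 : (0:ℝ) ≤ (1 - x ^ α) ^ (β - 1) := Real.rpow_nonneg (by linarith) _
    have h1xb : (0:ℝ) ≤ (1 - x) ^ (b' - 1) := Real.rpow_nonneg h1x0 _
    constructor
    · have : (0:ℝ) ≤ (1 - x) ^ k := pow_nonneg h1x0 k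
      positivity
    · calc F x ≤ (2:ℝ)⁻¹ ^ k * (C₁ * (K * (1 - x) ^ (b' - 1))) := by
            apply mul_le_mul hp _ (by positivity) (by positivity)
            exact mul_le_mul (hxC₁ x hx) hbb hs0 (by linarith)
        _ = (2:ℝ)⁻¹ ^ k * (C₁ * K * (1 - x) ^ (b' - 1)) := by ring
  -- interval integrabilities
  have h02 : (0:ℝ) ≤ 2⁻¹ := by norm_num
  have h21 : ((2:ℝ)⁻¹) ≤ 1 := by norm_num
  have hIg : ∀ a : ℝ, 0 < a →
      IntervalIntegrable (fun x : ℝ => x ^ (a - 1) * exp (-(κ * x))) volume 0 2⁻¹ := by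
    intro a ha
    rw [intervalIntegrable_iff_integrableOn_Ioc_of_le h02]
    exact (gamma_integrable ha hκ0).mono_set Ioc_subset_Ioi_self
  have hII1 : IntervalIntegrable F volume 0 2⁻¹ := by
    apply IntervalIntegrable.mono_fun'
      ((intervalIntegrable_rpow' (by linarith : (-1:ℝ) < α - 1)).const_mul (1 + L * q))
      hFmeas.aestronglyMeasurable
    rw [uIoc_of_le h02]
    refine (ae_restrict_iff' measurableSet_Ioc).mpr (ae_of_all _ fun x hx => ?_)
    have h := hFbd1 x hx
    show ‖F x‖ ≤ (1 + L * q) * x ^ (α - 1)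
    rw [Real.norm_eq_abs, abs_of_nonneg h.1]
    exact h.2
  have hIIP : IntervalIntegrable (fun x : ℝ => (1 - x) ^ k * x ^ (α - 1)) volume 0 2⁻¹ := by
    apply IntervalIntegrable.mono_fun' (intervalIntegrable_rpow' (by linarith : (-1:ℝ) < α - 1))
      ((by fun_prop : Measurable (fun x : ℝ => (1 - x) ^ k * x ^ (α - 1))).aestronglyMeasurable)
    rw [uIoc_of_le h02]
    refine (ae_restrict_iff' measurableSet_Ioc).mpr (ae_of_all _ fun x hx => ?_)
    have hx0 : (0:ℝ) < x := hx.1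
    have hx1 : x ≤ 1 := le_trans hx.2 h21
    have hp1 : (1 - x) ^ k ≤ 1 := pow_le_one₀ (by linarith) (by linarith)
    have hp0 : (0:ℝ) ≤ (1 - x) ^ k := pow_nonneg (by linarith) k
    have hr0 : (0:ℝ) ≤ x ^ (α - 1) := Real.rpow_nonneg hx0.le _
    show ‖(1 - x) ^ k * x ^ (α - 1)‖ ≤ x ^ (α - 1)
    rw [Real.norm_eq_abs, abs_of_nonneg (by positivity)]
    calc (1 - x) ^ k * x ^ (α - 1) ≤ 1 * x ^ (α - 1) := mul_le_mul_of_nonneg_right hp1 hr0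
      _ = x ^ (α - 1) := one_mul _
  have hII2 : IntervalIntegrable F volume 2⁻¹ 1 := by
    apply IntervalIntegrable.mono_fun' (hIIb.const_mul ((2:ℝ)⁻¹ ^ k * (C₁ * K)))
      hFmeas.aestronglyMeasurable
    rw [uIoc_of_le h21]
    refine (ae_restrict_iff' measurableSet_Ioc).mpr (ae_of_all _ fun x hx => ?_)
    have h := hFbd2 x (Ioc_subset_Icc_self hx)
    show ‖F x‖ ≤ (2:ℝ)⁻¹ ^ k * (C₁ * K) * (1 - x) ^ (b' - 1)
    rw [Real.norm_eq_abs, abs_of_nonneg h.1]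
    exact h.2.trans (le_of_eq (by ring))
  -- names for the pieces
  set S1 : ℝ := ∫ x in (0:ℝ)..2⁻¹, F x with hS1def
  set S2 : ℝ := ∫ x in ((2:ℝ)⁻¹)..1, F x with hS2def
  set P : ℝ := ∫ x in (0:ℝ)..2⁻¹, (1 - x) ^ k * x ^ (α - 1) with hPdef
  set Q : ℝ := ∫ x in (0:ℝ)..2⁻¹, x ^ (α - 1) * exp (-(κ * x)) with hQdef
  have h2α : (0:ℝ) < 2 * α := by linarith
  have hα2 : (0:ℝ) < α + 2 := by linarith
  -- S2 bounds
  have hS2low : 0 ≤ S2 := intervalIntegral.integral_nonneg h21 (fun u hu => (hFbd2 u hu).1)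
  have hS2up : S2 ≤ (2:ℝ)⁻¹ ^ k * (C₁ * K * Ib) := by
    have hmono := intervalIntegral.integral_mono_on h21 hII2
      (hIIb.const_mul ((2:ℝ)⁻¹ ^ k * (C₁ * K)))
      (fun x hx => (hFbd2 x hx).2.trans (le_of_eq (by ring)))
    rw [intervalIntegral.integral_const_mul] at hmono
    calc S2 ≤ ((2:ℝ)⁻¹ ^ k * (C₁ * K)) * Ib := hmono
      _ = _ := by ring
  -- S1 - P
  have hS1P : |S1 - P| ≤ L * (Real.Gamma (2*α) * κ ^ (-(2*α))) := by
    rw [hS1def, hPdef, ← intervalIntegral.integral_sub hII1 hIIP]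
    have hb : ∀ᵐ t ∂(volume.restrict (Set.uIoc (0:ℝ) 2⁻¹)),
        ‖F t - (1 - t) ^ k * t ^ (α - 1)‖ ≤ L * (t ^ (2*α - 1) * exp (-(κ * t))) := by
      rw [uIoc_of_le h02]
      refine (ae_restrict_iff' measurableSet_Ioc).mpr (ae_of_all _ fun x hx => ?_)
      have hx0 : (0:ℝ) < x := hx.1
      have hx1 : x ≤ 1 := le_trans hx.2 h21
      have hyq : x ^ α ≤ q := Real.rpow_le_rpow hx0.le hx.2 hα.le
      have hlip := hLip (x ^ α) ⟨Real.rpow_nonneg hx0.le _, hyq⟩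
      have heq : F x - (1 - x) ^ k * x ^ (α - 1)
          = ((1 - x) ^ k * x ^ (α - 1)) * ((1 - x ^ α) ^ (β - 1) - 1) := by
        rw [hF]; ring
      have hp0 : (0:ℝ) ≤ (1 - x) ^ k := pow_nonneg (by linarith) k
      have hr0 : (0:ℝ) ≤ x ^ (α - 1) := Real.rpow_nonneg hx0.le _
      rw [heq, norm_mul, Real.norm_eq_abs, Real.norm_eq_abs,
        abs_of_nonneg (mul_nonneg hp0 hr0)]
      have hstep : (1 - x) ^ k * x ^ (α - 1) * |(1 - x ^ α) ^ (β - 1) - 1|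
          ≤ (exp (-(κ * x)) * x ^ (α - 1)) * (L * x ^ α) := by
        apply mul_le_mul _ hlip (abs_nonneg _) (by positivity)
        rw [hκ]
        exact mul_le_mul_of_nonneg_right (pow_le_exp_neg k hx0.le hx1) hr0
      refine hstep.trans (le_of_eq ?_)
      have hxx : x ^ (α - 1) * x ^ α = x ^ (2*α - 1) := by
        rw [← Real.rpow_add hx0]; congr 1; ring
      calc (exp (-(κ * x)) * x ^ (α - 1)) * (L * x ^ α)
          = L * ((x ^ (α - 1) * x ^ α) * exp (-(κ * x))) := by ring
        _ = L * (x ^ (2*α - 1) * exp (-(κ * x))) := by rw [hxx]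
    have hIg2 : IntervalIntegrable (fun x : ℝ => L * (x ^ (2*α - 1) * exp (-(κ * x))))
        volume 0 2⁻¹ := (hIg (2*α) h2α).const_mul L
    have hnorm := intervalIntegral.norm_integral_le_abs_of_norm_le hb hIg2
    rw [Real.norm_eq_abs] at hnorm
    refine hnorm.trans ?_
    have h0 : 0 ≤ ∫ x in (0:ℝ)..2⁻¹, x ^ (2*α - 1) * exp (-(κ * x)) :=
      intervalIntegral.integral_nonneg h02
        (fun u hu => mul_nonneg (Real.rpow_nonneg hu.1 _) (exp_nonneg _))
    rw [intervalIntegral.integral_const_mul, abs_mul, abs_of_nonneg hL0, abs_of_nonneg h0]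
    apply mul_le_mul_of_nonneg_left _ hL0
    rw [intervalIntegral.integral_of_le h02, ← gamma_int h2α hκ0]
    apply setIntegral_mono_set (gamma_integrable h2α hκ0)
    · refine (ae_restrict_iff' measurableSet_Ioi).mpr (ae_of_all _ fun x hx => ?_)
      have : (0:ℝ) < x := hx
      positivity
    · exact HasSubset.Subset.eventuallyLE Ioc_subset_Ioi_self
  -- P - Q
  have hPQ : |P - Q| ≤ 2 * Real.Gamma (α+2) * κ ^ (-(α+1)) := by
    have hmain : |P - Q| ≤ (2 * κ) * (Real.Gamma (α+2) * κ ^ (-(α+2))) := by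
      rw [hPdef, hQdef, ← intervalIntegral.integral_sub hIIP (hIg α hα)]
      have hb : ∀ᵐ t ∂(volume.restrict (Set.uIoc (0:ℝ) 2⁻¹)),
          ‖(1 - t) ^ k * t ^ (α - 1) - t ^ (α - 1) * exp (-(κ * t))‖
            ≤ (2 * κ) * (t ^ (α + 2 - 1) * exp (-(κ * t))) := by
        rw [uIoc_of_le h02]
        refine (ae_restrict_iff' measurableSet_Ioc).mpr (ae_of_all _ fun x hx => ?_)
        have hx0 : (0:ℝ) < x := hx.1
        have hx12 : x ≤ 1/2 := by
          have := hx.2; norm_num at this ⊢; linarith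
        have hx1 : x ≤ 1 := by linarith
        have hr0 : (0:ℝ) ≤ x ^ (α - 1) := Real.rpow_nonneg hx0.le _
        have hle : (1 - x) ^ k ≤ exp (-(κ * x)) := by rw [hκ]; exact pow_le_exp_neg k hx0.le hx1
        have hdiff := exp_sub_pow_le k hx0.le hx12
        rw [← hκ] at hdiff
        have heq : (1 - x) ^ k * x ^ (α - 1) - x ^ (α - 1) * exp (-(κ * x))
            = -(x ^ (α - 1) * (exp (-(κ * x)) - (1 - x) ^ k)) := by ring
        rw [heq, norm_neg, Real.norm_eq_abs,
          abs_of_nonneg (mul_nonneg hr0 (by linarith))]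
        have hstep : x ^ (α - 1) * (exp (-(κ * x)) - (1 - x) ^ k)
            ≤ x ^ (α - 1) * (2 * κ * x ^ 2 * exp (-(κ * x))) :=
          mul_le_mul_of_nonneg_left hdiff hr0
        refine hstep.trans (le_of_eq ?_)
        have hxx : x ^ (α - 1) * x ^ 2 = x ^ (α + 2 - 1) := by
          rw [pow_two, ← mul_assoc, ← Real.rpow_add_one hx0.ne', ← Real.rpow_add_one hx0.ne']
          congr 1; ring
        calc x ^ (α - 1) * (2 * κ * x ^ 2 * exp (-(κ * x)))
            = (2 * κ) * ((x ^ (α - 1) * x ^ 2) * exp (-(κ * x))) := by ring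
          _ = (2 * κ) * (x ^ (α + 2 - 1) * exp (-(κ * x))) := by rw [hxx]
      have hIg3 : IntervalIntegrable (fun x : ℝ => (2 * κ) * (x ^ (α + 2 - 1) * exp (-(κ * x))))
          volume 0 2⁻¹ := (hIg (α+2) hα2).const_mul _
      have hnorm := intervalIntegral.norm_integral_le_abs_of_norm_le hb hIg3
      rw [Real.norm_eq_abs] at hnorm
      refine hnorm.trans ?_
      have h0 : 0 ≤ ∫ x in (0:ℝ)..2⁻¹, x ^ (α + 2 - 1) * exp (-(κ * x)) :=
        intervalIntegral.integral_nonneg h02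
          (fun u hu => mul_nonneg (Real.rpow_nonneg hu.1 _) (exp_nonneg _))
      rw [intervalIntegral.integral_const_mul, abs_mul,
        abs_of_nonneg (by positivity : (0:ℝ) ≤ 2 * κ), abs_of_nonneg h0]
      apply mul_le_mul_of_nonneg_left _ (by positivity)
      rw [intervalIntegral.integral_of_le h02, ← gamma_int hα2 hκ0]
      apply setIntegral_mono_set (gamma_integrable hα2 hκ0)
      · refine (ae_restrict_iff' measurableSet_Ioi).mpr (ae_of_all _ fun x hx => ?_)
        have : (0:ℝ) < x := hx
        positivity
      · exact HasSubset.Subset.eventuallyLE Ioc_subset_Ioi_self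
    refine hmain.trans (le_of_eq ?_)
    have hxx : κ ^ (-(α+2)) * κ = κ ^ (-(α+1)) := by
      rw [← Real.rpow_add_one hκ0.ne']; congr 1; ring
    calc (2 * κ) * (Real.Gamma (α+2) * κ ^ (-(α+2)))
        = 2 * Real.Gamma (α+2) * (κ ^ (-(α+2)) * κ) := by ring
      _ = 2 * Real.Gamma (α+2) * κ ^ (-(α+1)) := by rw [hxx]
  -- tail of the Gamma integral
  have hIoiSub : Ioi ((2:ℝ)⁻¹) ⊆ Ioi (0:ℝ) := Ioi_subset_Ioi (by norm_num)
  set T : ℝ := ∫ x in Ioi ((2:ℝ)⁻¹), x ^ (α - 1) * exp (-(κ * x)) with hTdef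
  have hsplit : Real.Gamma α * κ ^ (-α) = Q + T := by
    rw [← gamma_int hα hκ0, hQdef, intervalIntegral.integral_of_le h02, hTdef,
      ← setIntegral_union (Ioc_disjoint_Ioi le_rfl) measurableSet_Ioi
        ((gamma_integrable hα hκ0).mono_set Ioc_subset_Ioi_self)
        ((gamma_integrable hα hκ0).mono_set hIoiSub),
      Ioc_union_Ioi_eq_Ioi h02]
  have hT0 : 0 ≤ T := by
    rw [hTdef]
    apply setIntegral_nonneg measurableSet_Ioi
    intro x hx
    have hx0 : (0:ℝ) < x := lt_trans (by norm_num) hx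
    positivity
  have hTup : T ≤ Real.Gamma α * exp 2⁻¹ * (exp (-2⁻¹)) ^ k := by
    have hcoef0 : (0:ℝ) ≤ exp 2⁻¹ * (exp (-2⁻¹)) ^ k := by positivity
    have hstep1 : T ≤ ∫ x in Ioi ((2:ℝ)⁻¹),
        (exp 2⁻¹ * (exp (-2⁻¹)) ^ k) * (x ^ (α - 1) * exp (-(1 * x))) := by
      rw [hTdef]
      apply setIntegral_mono_on ((gamma_integrable hα hκ0).mono_set hIoiSub)
        (((gamma_integrable hα one_pos).mono_set hIoiSub).const_mul _) measurableSet_Ioi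
      intro x hx
      have hx2 : (2:ℝ)⁻¹ < x := hx
      have hx0 : (0:ℝ) < x := lt_trans (by norm_num) hx2
      have hcoef : exp 2⁻¹ * (exp (-2⁻¹)) ^ k = exp (2⁻¹ - κ * 2⁻¹) := by
        rw [← Real.exp_nat_mul, ← Real.exp_add, hκ]; congr 1; ring
      have hexp : exp (-(κ * x)) ≤ exp (2⁻¹ - κ * 2⁻¹) * exp (-(1 * x)) := by
        rw [← Real.exp_add]
        apply Real.exp_le_exp.mpr
        nlinarith [mul_nonneg (sub_nonneg.mpr hκ1) (sub_nonneg.mpr hx2.le)]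
      calc x ^ (α - 1) * exp (-(κ * x))
          ≤ x ^ (α - 1) * (exp (2⁻¹ - κ * 2⁻¹) * exp (-(1 * x))) :=
            mul_le_mul_of_nonneg_left hexp (Real.rpow_nonneg hx0.le _)
        _ = exp (2⁻¹ - κ * 2⁻¹) * (x ^ (α - 1) * exp (-(1 * x))) := by ring
        _ = (exp 2⁻¹ * (exp (-2⁻¹)) ^ k) * (x ^ (α - 1) * exp (-(1 * x))) := by rw [hcoef]
    refine hstep1.trans ?_
    rw [MeasureTheory.integral_const_mul]
    have hstep2 : (∫ x in Ioi ((2:ℝ)⁻¹), x ^ (α - 1) * exp (-(1 * x))) ≤ Real.Gamma α := by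
      have h := setIntegral_mono_set (gamma_integrable hα one_pos)
        ((ae_restrict_iff' measurableSet_Ioi).mpr (ae_of_all _ fun x hx => by
          have : (0:ℝ) < x := hx
          positivity))
        (HasSubset.Subset.eventuallyLE hIoiSub)
      rw [gamma_int hα one_pos, Real.one_rpow] at h
      simpa using h
    calc (exp 2⁻¹ * (exp (-2⁻¹)) ^ k) * ∫ x in Ioi ((2:ℝ)⁻¹), x ^ (α - 1) * exp (-(1 * x))
        ≤ (exp 2⁻¹ * (exp (-2⁻¹)) ^ k) * Real.Gamma α :=
          mul_le_mul_of_nonneg_left hstep2 hcoef0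
      _ = Real.Gamma α * exp 2⁻¹ * (exp (-2⁻¹)) ^ k := by ring
  -- assemble
  have hInner : (∫ x in (0:ℝ)..1, (1 - x) ^ k * (x ^ (α - 1) * (1 - x ^ α) ^ (β - 1)))
      = S1 + S2 := (intervalIntegral.integral_add_adjacent_intervals hII1 hII2).symm
  have ht1 : (0:ℝ) ≤ κ ^ (-(α + min α 1)) := Real.rpow_nonneg hκ0.le _
  have ht2 : (0:ℝ) ≤ (2:ℝ)⁻¹ ^ k := by positivity
  have ht3 : (0:ℝ) ≤ (exp (-2⁻¹)) ^ k := by positivity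
  have he1 : κ ^ (-(2*α)) ≤ κ ^ (-(α + min α 1)) :=
    Real.rpow_le_rpow_of_exponent_le hκ1 (by have := min_le_left α 1; linarith)
  have he2 : κ ^ (-(α+1)) ≤ κ ^ (-(α + min α 1)) :=
    Real.rpow_le_rpow_of_exponent_le hκ1 (by have := min_le_right α 1; linarith)
  have hG2α : 0 ≤ Real.Gamma (2*α) := Real.Gamma_nonneg_of_nonneg (by linarith)
  have hGα2 : 0 ≤ Real.Gamma (α+2) := Real.Gamma_nonneg_of_nonneg (by linarith)
  have hGα : 0 ≤ Real.Gamma α := Real.Gamma_nonneg_of_nonneg hα.le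
  have hA3 : |S1 - P| ≤ L * Real.Gamma (2*α) * κ ^ (-(α + min α 1)) := by
    refine hS1P.trans ?_
    calc L * (Real.Gamma (2*α) * κ ^ (-(2*α))) = (L * Real.Gamma (2*α)) * κ ^ (-(2*α)) := by ring
      _ ≤ (L * Real.Gamma (2*α)) * κ ^ (-(α + min α 1)) :=
        mul_le_mul_of_nonneg_left he1 (mul_nonneg hL0 hG2α)
  have hA4 : |P - Q| ≤ 2 * Real.Gamma (α+2) * κ ^ (-(α + min α 1)) := by
    refine hPQ.trans ?_
    exact mul_le_mul_of_nonneg_left he2 (by positivity)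
  rw [hInner, hsplit]
  have hC1K : (0:ℝ) ≤ C₁ * K * Ib := by positivity
  have hLG : (0:ℝ) ≤ L * Real.Gamma (2*α) := mul_nonneg hL0 hG2α
  have hGe : (0:ℝ) ≤ Real.Gamma α * exp 2⁻¹ := mul_nonneg hGα (exp_nonneg _)
  have hb1 : Real.Gamma α * exp 2⁻¹ ≤ C₁ * K * Ib + L * Real.Gamma (2*α)
      + 2 * Real.Gamma (α+2) + Real.Gamma α * exp 2⁻¹ + 1 := by linarith
  have hb2 : L * Real.Gamma (2*α) + 2 * Real.Gamma (α+2) ≤ C₁ * K * Ib + L * Real.Gamma (2*α)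
      + 2 * Real.Gamma (α+2) + Real.Gamma α * exp 2⁻¹ + 1 := by linarith
  have hb3 : C₁ * K * Ib ≤ C₁ * K * Ib + L * Real.Gamma (2*α)
      + 2 * Real.Gamma (α+2) + Real.Gamma α * exp 2⁻¹ + 1 := by linarith
  have h3 := abs_le.mp hA3
  have h4 := abs_le.mp hA4
  rw [abs_le]
  have h2G : (0:ℝ) ≤ 2 * Real.Gamma (α+2) := by positivity
  constructor
  · linarith [mul_le_mul_of_nonneg_right hb1 ht3, mul_le_mul_of_nonneg_right hb2 ht1,
      mul_le_mul_of_nonneg_right hb3 ht2, mul_nonneg hC1K ht1, mul_nonneg hC1K ht2,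
      mul_nonneg hC1K ht3, mul_nonneg hLG ht2, mul_nonneg hLG ht3, mul_nonneg h2G ht2,
      mul_nonneg h2G ht3, mul_nonneg hGe ht1, mul_nonneg hGe ht2, mul_nonneg hGe ht3,
      ht1, ht2, ht3]
  · linarith [mul_le_mul_of_nonneg_right hb1 ht3, mul_le_mul_of_nonneg_right hb2 ht1,
      mul_le_mul_of_nonneg_right hb3 ht2, mul_nonneg hC1K ht1, mul_nonneg hC1K ht2,
      mul_nonneg hC1K ht3, mul_nonneg hLG ht2, mul_nonneg hLG ht3, mul_nonneg h2G ht2,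
      mul_nonneg h2G ht3, mul_nonneg hGe ht1, mul_nonneg hGe ht2, mul_nonneg hGe ht3,
      ht1, ht2, ht3]

end KumAux

open KumAux

/-- **Kumaraswamy distribution: power law with exponent `α`.** If per-attempt
success probabilities follow `Kumaraswamy(α, β)` with density
`α·β·x^(α-1)·(1-x^α)^(β-1)` on `(0,1)`, then
`I_k = ∫₀¹ (1-x)^k f(x) dx = α·β·Γ(α)·k^(-α) + O(k^(-α-ε))` for some `ε > 0`,
and `-log(pass_{Kumaraswamy(α,β)}@k) = α·β·Γ(α)·k^(-α) + o(k^(-α))`. -/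
theorem neg_log_pass_kumaraswamy_power_law
    (α β : ℝ) (hα : 0 < α) (hβ : 0 < β) :
    (∃ ε > (0:ℝ), ∃ M > (0:ℝ), ∃ k₀ : ℕ, ∀ k : ℕ, k₀ ≤ k →
      |(∫ x in (0:ℝ)..1, (1 - x) ^ k *
            (α * β * x ^ (α - 1) * (1 - x ^ α) ^ (β - 1)))
          - α * β * Real.Gamma α * (k : ℝ) ^ (-α)|
        ≤ M * (k : ℝ) ^ (-(α + ε))) ∧
    Tendsto
      (fun k : ℕ =>
        ((-Real.log (1 - ∫ x in (0:ℝ)..1, (1 - x) ^ k *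
              (α * β * x ^ (α - 1) * (1 - x ^ α) ^ (β - 1))))
            - α * β * Real.Gamma α * (k : ℝ) ^ (-α)) * (k : ℝ) ^ α)
      atTop (nhds 0) := by
  obtain ⟨C, hC, hkey⟩ := KumAux.key hα hβ
  set ε : ℝ := min α 1 with hε
  have hε0 : 0 < ε := lt_min hα one_pos
  have hεα : (0:ℝ) < α + ε := by positivity
  set J : ℕ → ℝ := fun k => ∫ x in (0:ℝ)..1, (1 - x) ^ k *
      (α * β * x ^ (α - 1) * (1 - x ^ α) ^ (β - 1)) with hJ
  have hrw : ∀ k : ℕ, J k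
      = α * β * ∫ x in (0:ℝ)..1, (1 - x) ^ k * (x ^ (α - 1) * (1 - x ^ α) ^ (β - 1)) := by
    intro k
    rw [hJ, ← intervalIntegral.integral_const_mul]
    exact intervalIntegral.integral_congr (fun x _ => by ring)
  set M : ℝ := α * β * (3 * C) with hM
  have hM0 : 0 < M := by positivity
  set c : ℝ := α * β * Real.Gamma α with hc
  have hc0 : 0 < c := by
    have := Real.Gamma_pos_of_pos hα
    positivity
  have hev : ∀ᶠ k : ℕ in atTop, |J k - c * (k:ℝ) ^ (-α)| ≤ M * (k:ℝ) ^ (-(α + ε)) := by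
    filter_upwards [eventually_ge_atTop 1,
      geom_eventually_le (by norm_num : (0:ℝ) ≤ 2⁻¹) (by norm_num : (2:ℝ)⁻¹ < 1) hεα,
      geom_eventually_le (exp_nonneg (-2⁻¹))
        (Real.exp_lt_one_iff.mpr (by norm_num)) hεα] with k hk1 hg1 hg2
    have h := hkey k hk1
    have hab0 : (0:ℝ) ≤ α * β := by positivity
    rw [hrw k, hc, show α * β * (∫ x in (0:ℝ)..1, (1 - x) ^ k *
        (x ^ (α - 1) * (1 - x ^ α) ^ (β - 1))) - α * β * Real.Gamma α * (k:ℝ) ^ (-α)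
        = α * β * ((∫ x in (0:ℝ)..1, (1 - x) ^ k * (x ^ (α - 1) * (1 - x ^ α) ^ (β - 1)))
          - Real.Gamma α * (k:ℝ) ^ (-α)) by ring, abs_mul, abs_of_nonneg hab0]
    calc α * β * |(∫ x in (0:ℝ)..1, (1 - x) ^ k * (x ^ (α - 1) * (1 - x ^ α) ^ (β - 1)))
          - Real.Gamma α * (k:ℝ) ^ (-α)|
        ≤ α * β * (C * ((k:ℝ) ^ (-(α + ε)) + (2:ℝ)⁻¹ ^ k + (Real.exp (-2⁻¹)) ^ k)) :=
          mul_le_mul_of_nonneg_left h hab0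
      _ ≤ α * β * (C * (3 * (k:ℝ) ^ (-(α + ε)))) := by
          apply mul_le_mul_of_nonneg_left _ hab0
          apply mul_le_mul_of_nonneg_left _ hC.le
          linarith
      _ = M * (k:ℝ) ^ (-(α + ε)) := by rw [hM]; ring
  have hJ0 : ∀ k : ℕ, 0 ≤ J k := by
    intro k
    apply intervalIntegral.integral_nonneg (by norm_num)
    intro u hu
    have h1 : (0:ℝ) ≤ 1 - u := by linarith [hu.2]
    have h2 : (0:ℝ) ≤ u ^ (α - 1) := Real.rpow_nonneg hu.1 _
    have h3 : u ^ α ≤ 1 := Real.rpow_le_one hu.1 hu.2 hα.le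
    have h4 : (0:ℝ) ≤ (1 - u ^ α) ^ (β - 1) := Real.rpow_nonneg (by linarith) _
    have h5 : (0:ℝ) ≤ (1 - u) ^ k := pow_nonneg h1 k
    positivity
  constructor
  · refine ⟨ε, hε0, M, hM0, ?_⟩
    obtain ⟨k₀, hk₀⟩ := eventually_atTop.mp hev
    exact ⟨k₀, hk₀⟩
  · -- part 2
    have htend : Tendsto (fun k : ℕ => (k:ℝ) ^ (-α)) atTop (nhds 0) :=
      (tendsto_rpow_neg_atTop hα).comp tendsto_natCast_atTop_atTop
    have htendε : Tendsto (fun k : ℕ => (k:ℝ) ^ (-ε)) atTop (nhds 0) :=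
      (tendsto_rpow_neg_atTop hε0).comp tendsto_natCast_atTop_atTop
    have hhalf : ∀ᶠ k : ℕ in atTop, (c + M) * (k:ℝ) ^ (-α) < 1/2 :=
      (htend.const_mul (c + M)).eventually_lt_const (by norm_num)
    have hg : Tendsto (fun k : ℕ => 2 * (c + M)^2 * (k:ℝ) ^ (-α) + M * (k:ℝ) ^ (-ε))
        atTop (nhds 0) := by
      have := (htend.const_mul (2 * (c + M)^2)).add (htendε.const_mul M)
      simpa using this
    apply squeeze_zero_norm' _ hg
    filter_upwards [hev, hhalf, eventually_ge_atTop 1] with k hk hhf hk1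
    have hκ1 : (1:ℝ) ≤ (k:ℝ) := by exact_mod_cast hk1
    have hκ0 : (0:ℝ) < (k:ℝ) := by linarith
    have hκα0 : (0:ℝ) ≤ (k:ℝ) ^ α := Real.rpow_nonneg hκ0.le α
    have hεle : (k:ℝ) ^ (-(α + ε)) ≤ (k:ℝ) ^ (-α) :=
      Real.rpow_le_rpow_of_exponent_le hκ1 (by linarith)
    have habs := abs_le.mp hk
    have hJup : J k ≤ (c + M) * (k:ℝ) ^ (-α) := by
      have h1 : M * (k:ℝ) ^ (-(α + ε)) ≤ M * (k:ℝ) ^ (-α) :=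
        mul_le_mul_of_nonneg_left hεle hM0.le
      linarith [habs.2]
    have hJhalf : J k ≤ 1/2 := hJup.trans hhf.le
    have hJ0k : 0 ≤ J k := hJ0 k
    have hJlt1 : |J k| < 1 := by rw [abs_of_nonneg hJ0k]; linarith
    have hlog : |Real.log (1 - J k) + J k| ≤ 2 * (J k)^2 := by
      have hlog1 := Real.abs_log_sub_add_sum_range_le hJlt1 1
      have h2 : |J k + Real.log (1 - J k)| ≤ J k ^ 2 / (1 - J k) := by
        simpa [abs_of_nonneg hJ0k] using hlog1
      have h3 : J k ^ 2 / (1 - J k) ≤ 2 * (J k)^2 := by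
        rw [div_le_iff₀ (by linarith : (0:ℝ) < 1 - J k)]
        nlinarith
      calc |Real.log (1 - J k) + J k| = |J k + Real.log (1 - J k)| := by rw [add_comm]
        _ ≤ _ := h2.trans h3
    have hexpr : |(-Real.log (1 - J k)) - c * (k:ℝ) ^ (-α)|
        ≤ 2 * (J k)^2 + M * (k:ℝ) ^ (-(α + ε)) := by
      have heq : (-Real.log (1 - J k)) - c * (k:ℝ) ^ (-α)
          = (-(Real.log (1 - J k) + J k)) + (J k - c * (k:ℝ) ^ (-α)) := by ring
      rw [heq]
      calc |(-(Real.log (1 - J k) + J k)) + (J k - c * (k:ℝ) ^ (-α))|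
          ≤ |(-(Real.log (1 - J k) + J k))| + |J k - c * (k:ℝ) ^ (-α)| := abs_add_le _ _
        _ ≤ 2 * (J k)^2 + M * (k:ℝ) ^ (-(α + ε)) := by
            rw [abs_neg]
            exact add_le_add hlog hk
    have hone : (k:ℝ) ^ (-α) * (k:ℝ) ^ α = 1 := by
      rw [← Real.rpow_add hκ0]; simp
    have hJ2 : (J k)^2 * (k:ℝ) ^ α ≤ (c + M)^2 * (k:ℝ) ^ (-α) := by
      have h1 : (J k)^2 ≤ ((c + M) * (k:ℝ) ^ (-α))^2 := pow_le_pow_left₀ hJ0k hJup 2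
      have h2 : ((c + M) * (k:ℝ) ^ (-α))^2 * (k:ℝ) ^ α = (c + M)^2 * (k:ℝ) ^ (-α) := by
        have h3 : (k:ℝ) ^ (-α) * ((k:ℝ) ^ (-α) * (k:ℝ) ^ α) = (k:ℝ) ^ (-α) := by
          rw [hone, mul_one]
        calc ((c + M) * (k:ℝ) ^ (-α))^2 * (k:ℝ) ^ α
            = (c + M)^2 * ((k:ℝ) ^ (-α) * ((k:ℝ) ^ (-α) * (k:ℝ) ^ α)) := by ring
          _ = (c + M)^2 * (k:ℝ) ^ (-α) := by rw [h3]
      calc (J k)^2 * (k:ℝ) ^ α ≤ ((c + M) * (k:ℝ) ^ (-α))^2 * (k:ℝ) ^ α :=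
            mul_le_mul_of_nonneg_right h1 hκα0
        _ = _ := h2
    have hMε : (k:ℝ) ^ (-(α + ε)) * (k:ℝ) ^ α = (k:ℝ) ^ (-ε) := by
      rw [← Real.rpow_add hκ0]; congr 1; ring
    rw [Real.norm_eq_abs, abs_mul, abs_of_nonneg hκα0]
    calc |(-Real.log (1 - J k)) - c * (k:ℝ) ^ (-α)| * (k:ℝ) ^ α
        ≤ (2 * (J k)^2 + M * (k:ℝ) ^ (-(α + ε))) * (k:ℝ) ^ α :=
          mul_le_mul_of_nonneg_right hexpr hκα0
      _ = 2 * ((J k)^2 * (k:ℝ) ^ α) + M * ((k:ℝ) ^ (-(α + ε)) * (k:ℝ) ^ α) := by ring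
      _ ≤ 2 * ((c + M)^2 * (k:ℝ) ^ (-α)) + M * (k:ℝ) ^ (-ε) := by
          rw [hMε]
          have := mul_le_mul_of_nonneg_left hJ2 (by norm_num : (0:ℝ) ≤ 2)
          linarith
      _ = 2 * (c + M)^2 * (k:ℝ) ^ (-α) + M * (k:ℝ) ^ (-ε) := by ring
end

section
/- Let 0 < λ < 1/2 and let p follow the Continuous Bernoulli(λ) distribution with density f(x) = C(λ)·λ^x·(1−λ)^(1−x) on [0,1], where C(λ) = (2·artanh(1−2λ))/(1−2λ). Let pass_{ContinuousBernoulli(λ)}@k := 1 − ∫₀¹ (1−p)^k f(p) dp. Then −log(pass_{ContinuousBernoulli(λ)}@k) = C(λ)·(1−λ)·k^(−1) + o(k^(−1)) as k → ∞; in particular the negative log aggregate success rate follows a power law in k with exponent 1. -/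
open MeasureTheory Real Filter

/-- The inverse hyperbolic tangent, `artanh x = (1/2)·log((1+x)/(1-x))`. -/
noncomputable def artanh (x : ℝ) : ℝ := Real.log ((1 + x) / (1 - x)) / 2

set_option maxHeartbeats 1000000 in
/-- **Continuous Bernoulli distribution: power law with exponent 1.** If
per-attempt success probabilities follow `ContinuousBernoulli(λ)` with
`0 < λ < 1/2`, density `C(λ)·λ^x·(1-λ)^(1-x)` on `[0,1]` where
`C(λ) = 2·artanh(1-2λ)/(1-2λ)`, then
`-log(pass_{ContinuousBernoulli(λ)}@k) = C(λ)·(1-λ)·k^(-1) + o(k^(-1))`. -/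
theorem neg_log_pass_continuous_bernoulli_power_law
    (lam : ℝ) (hlam0 : 0 < lam) (hlam : lam < 1 / 2) :
    Tendsto
      (fun k : ℕ =>
        ((-Real.log (1 - ∫ p in (0:ℝ)..1, (1 - p) ^ k *
              ((2 * _root_.artanh (1 - 2 * lam) / (1 - 2 * lam)) *
                lam ^ p * (1 - lam) ^ (1 - p))))
            - (2 * _root_.artanh (1 - 2 * lam) / (1 - 2 * lam)) * (1 - lam) * (k : ℝ)⁻¹)
          * (k : ℝ))
      atTop (nhds 0) := by
  have h1 : (0:ℝ) < 1 - lam := by linarith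
  set b : ℝ := Real.log (1 - lam) - Real.log lam with hb
  have hbpos : 0 < b := sub_pos.mpr (Real.log_lt_log hlam0 (by linarith))
  have hart : _root_.artanh (1 - 2 * lam) = b / 2 := by
    unfold _root_.artanh
    have he : (1 + (1 - 2 * lam)) / (1 - (1 - 2 * lam)) = (1 - lam) / lam := by
      rw [show (1:ℝ) + (1 - 2*lam) = 2 * (1 - lam) by ring,
        show (1:ℝ) - (1 - 2*lam) = 2 * lam by ring,
        mul_div_mul_left _ _ (two_ne_zero)]
    rw [he, Real.log_div (ne_of_gt h1) (ne_of_gt hlam0)]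
  set C : ℝ := 2 * _root_.artanh (1 - 2 * lam) / (1 - 2 * lam) with hC
  have hCb : C = b / (1 - 2 * lam) := by rw [hC, hart]; ring
  have hCpos : 0 < C := by rw [hCb]; apply div_pos hbpos; linarith
  set A : ℝ := C * (1 - lam) with hA
  clear_value A C b
  have hApos : 0 < A := hA ▸ mul_pos hCpos h1
  set E : ℕ → ℝ := fun k => ∫ p in (0:ℝ)..1, (1 - p) ^ k * Real.exp (-b * p) with hE
  clear_value E
  -- rewrite the integral
  have hint : ∀ k : ℕ, (∫ p in (0:ℝ)..1, (1 - p) ^ k *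
      (C * lam ^ p * (1 - lam) ^ (1 - p))) = A * E k := by
    intro k
    rw [hE]
    rw [← intervalIntegral.integral_const_mul]
    apply intervalIntegral.integral_congr
    intro p _
    show (1 - p) ^ k * (C * lam ^ p * (1 - lam) ^ (1 - p))
        = A * ((1 - p) ^ k * Real.exp (-b * p))
    have h2 : lam ^ p * (1 - lam) ^ (1 - p) = (1 - lam) * Real.exp (-b * p) := by
      calc lam ^ p * (1 - lam) ^ (1 - p)
          = Real.exp (Real.log lam * p) * Real.exp (Real.log (1 - lam) * (1 - p)) := by
            rw [Real.rpow_def_of_pos hlam0, Real.rpow_def_of_pos h1]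
        _ = Real.exp (Real.log (1 - lam) + (-b * p)) := by
            rw [← Real.exp_add]; congr 1; rw [hb]; ring
        _ = (1 - lam) * Real.exp (-b * p) := by rw [Real.exp_add, Real.exp_log h1]
    rw [show (1 - p) ^ k * (C * lam ^ p * (1 - lam) ^ (1 - p))
        = C * ((1 - p) ^ k * (lam ^ p * (1 - lam) ^ (1 - p))) from by ring, h2, hA]
    ring
  -- integrability
  have hcont : ∀ k : ℕ, Continuous (fun p : ℝ => (1 - p) ^ k * Real.exp (-b * p)) := by
    intro k; continuity
  have hcontp : ∀ k : ℕ, Continuous (fun p : ℝ => (1 - p) ^ k) := by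
    intro k; continuity
  have hcontq : ∀ k : ℕ, Continuous (fun p : ℝ => (1 - p) ^ k - b * ((1 - p) ^ k * p)) := by
    intro k; continuity
  -- basic integrals
  have hJ1 : ∀ k : ℕ, (∫ p in (0:ℝ)..1, (1 - p) ^ k) = 1 / ((k:ℝ) + 1) := by
    intro k
    have h := intervalIntegral.integral_comp_sub_left (a := 0) (b := 1) (fun x : ℝ => x ^ k) 1
    norm_num [integral_pow] at h
    rw [h, one_div]
  have hJ2 : ∀ k : ℕ, (∫ p in (0:ℝ)..1, (1 - p) ^ k * p) = 1 / (((k:ℝ) + 1) * ((k:ℝ) + 2)) := by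
    intro k
    have h := intervalIntegral.integral_comp_sub_left (a := 0) (b := 1)
      (fun x : ℝ => x ^ k * (1 - x)) 1
    simp only [sub_sub_cancel] at h
    norm_num at h
    rw [h]
    have heq : (fun x : ℝ => x ^ k * (1 - x)) = fun x : ℝ => x ^ k - x ^ (k + 1) := by
      funext x; ring
    rw [heq, intervalIntegral.integral_sub ((continuous_pow k).intervalIntegrable 0 1)
      ((continuous_pow (k+1)).intervalIntegrable 0 1)]
    rw [integral_pow, integral_pow, one_pow, one_pow,
      zero_pow (Nat.succ_ne_zero k), zero_pow (Nat.succ_ne_zero (k+1)), sub_zero]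
    have h1k : ((k:ℝ) + 1) ≠ 0 := by positivity
    push_cast
    rw [div_sub_div _ _ h1k (by positivity : ((k:ℝ) + 1 + 1) ≠ 0),
      div_eq_div_iff (by positivity) (by positivity)]
    ring
  -- bounds on E k
  have hEub : ∀ k : ℕ, E k ≤ 1 / ((k:ℝ) + 1) := by
    intro k
    rw [← hJ1 k, hE]
    apply intervalIntegral.integral_mono_on zero_le_one
      ((hcont k).intervalIntegrable 0 1) ((hcontp k).intervalIntegrable 0 1)
    intro x hx
    have h1x : (0:ℝ) ≤ 1 - x := by linarith [hx.2]
    have : Real.exp (-b * x) ≤ 1 := by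
      rw [Real.exp_le_one_iff]
      have := hx.1; nlinarith
    calc (1 - x) ^ k * Real.exp (-b * x) ≤ (1 - x) ^ k * 1 :=
          mul_le_mul_of_nonneg_left this (pow_nonneg h1x k)
      _ = (1 - x) ^ k := mul_one _
  have hElb : ∀ k : ℕ, 1 / ((k:ℝ) + 1) - b * (1 / (((k:ℝ) + 1) * ((k:ℝ) + 2))) ≤ E k := by
    intro k
    have hcbt : Continuous (fun p : ℝ => b * ((1 - p) ^ k * p)) := by continuity
    have hcomp : (∫ p in (0:ℝ)..1, ((1 - p) ^ k - b * ((1 - p) ^ k * p)))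
        = 1 / ((k:ℝ) + 1) - b * (1 / (((k:ℝ) + 1) * ((k:ℝ) + 2))) := by
      rw [intervalIntegral.integral_sub ((hcontp k).intervalIntegrable 0 1)
        (hcbt.intervalIntegrable 0 1),
        intervalIntegral.integral_const_mul, hJ1, hJ2]
    rw [← hcomp, hE]
    apply intervalIntegral.integral_mono_on zero_le_one
      ((hcontq k).intervalIntegrable 0 1) ((hcont k).intervalIntegrable 0 1)
    intro x hx
    have h1x : (0:ℝ) ≤ 1 - x := by linarith [hx.2]
    have hexp : 1 + (-b * x) ≤ Real.exp (-b * x) := by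
      linarith [Real.add_one_le_exp (-b * x)]
    calc (1 - x) ^ k - b * ((1 - x) ^ k * x) = (1 - x) ^ k * (1 + (-b * x)) := by ring
      _ ≤ (1 - x) ^ k * Real.exp (-b * x) :=
          mul_le_mul_of_nonneg_left hexp (pow_nonneg h1x k)
  have hEnn : ∀ k : ℕ, 0 ≤ E k := by
    intro k
    rw [hE]
    apply intervalIntegral.integral_nonneg zero_le_one
    intro x hx
    have h1x : (0:ℝ) ≤ 1 - x := by linarith [hx.2]
    positivity
  -- rewrite the goal
  have hgoal : (fun k : ℕ =>
        ((-Real.log (1 - ∫ p in (0:ℝ)..1, (1 - p) ^ k *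
              (C * lam ^ p * (1 - lam) ^ (1 - p)))) - A * (k : ℝ)⁻¹) * (k : ℝ))
      = fun k : ℕ => ((-Real.log (1 - A * E k)) - A * (k : ℝ)⁻¹) * (k : ℝ) := by
    funext k; rw [hint k]
  rw [hgoal]
  -- the squeeze
  set L : ℕ → ℝ := fun k =>
    (A * (1 / ((k:ℝ) + 1) - b * (1 / (((k:ℝ) + 1) * ((k:ℝ) + 2)))) - A * (k:ℝ)⁻¹) * (k:ℝ)
    with hL
  set U : ℕ → ℝ := fun k =>
    ((1 - A * (1 / ((k:ℝ) + 1)))⁻¹ - 1 - A * (k:ℝ)⁻¹) * (k:ℝ) with hU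
  have hev : ∀ᶠ k : ℕ in atTop, 1 ≤ k ∧ 2 * A ≤ (k:ℝ) := by
    filter_upwards [eventually_ge_atTop 1,
      tendsto_natCast_atTop_atTop.eventually_ge_atTop (2 * A)] with k h1' h2'
    exact ⟨h1', h2'⟩
  have key : ∀ k : ℕ, 1 ≤ k → 2 * A ≤ (k:ℝ) →
      L k ≤ ((-Real.log (1 - A * E k)) - A * (k : ℝ)⁻¹) * (k : ℝ) ∧
      ((-Real.log (1 - A * E k)) - A * (k : ℝ)⁻¹) * (k : ℝ) ≤ U k := by
    intro k hk1 hk2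
    have hknn : (0:ℝ) ≤ (k:ℝ) := Nat.cast_nonneg k
    have hkp : (0:ℝ) < (k:ℝ) + 1 := by positivity
    set I : ℝ := A * E k with hI
    have hI0 : 0 ≤ I := mul_nonneg hApos.le (hEnn k)
    have hIub : I ≤ A * (1 / ((k:ℝ) + 1)) :=
      mul_le_mul_of_nonneg_left (hEub k) hApos.le
    have hIhalf : I ≤ 1 / 2 := by
      refine hIub.trans ?_
      rw [mul_one_div, div_le_div_iff₀ hkp two_pos]
      linarith
    have h1I : (0:ℝ) < 1 - I := by linarith
    have hAk : A * (1 / ((k:ℝ) + 1)) ≤ 1 / 2 := by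
      rw [mul_one_div, div_le_div_iff₀ hkp two_pos]; linarith
    have h1Ak : (0:ℝ) < 1 - A * (1 / ((k:ℝ) + 1)) := by linarith
    constructor
    · -- lower bound
      have hlog : I ≤ -Real.log (1 - I) := by
        have := Real.log_le_sub_one_of_pos h1I
        linarith
      have hIlb : A * (1 / ((k:ℝ) + 1) - b * (1 / (((k:ℝ) + 1) * ((k:ℝ) + 2)))) ≤ I :=
        mul_le_mul_of_nonneg_left (hElb k) hApos.le
      rw [hL]
      apply mul_le_mul_of_nonneg_right _ hknn
      linarith
    · -- upper bound
      have hlog : -Real.log (1 - I) ≤ (1 - I)⁻¹ - 1 := by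
        have := Real.log_le_sub_one_of_pos (inv_pos.mpr h1I)
        rw [Real.log_inv] at this
        linarith
      have hinv : (1 - I)⁻¹ ≤ (1 - A * (1 / ((k:ℝ) + 1)))⁻¹ := by
        apply inv_anti₀ h1Ak
        linarith
      rw [hU]
      apply mul_le_mul_of_nonneg_right _ hknn
      linarith
  -- limits of L and U
  have t1 : Tendsto (fun k : ℕ => (k:ℝ) / ((k:ℝ) + 1)) atTop (nhds 1) :=
    tendsto_natCast_div_add_atTop (1:ℝ)
  have t2 : Tendsto (fun k : ℕ => ((k:ℝ) + 2)⁻¹) atTop (nhds 0) := by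
    apply tendsto_inv_atTop_zero.comp
    exact tendsto_atTop_add_const_right atTop 2 tendsto_natCast_atTop_atTop
  have hLlim : Tendsto L atTop (nhds 0) := by
    have hLeq : ∀ᶠ k : ℕ in atTop, L k
        = A * ((k:ℝ) / ((k:ℝ) + 1)) - A * b * (((k:ℝ) / ((k:ℝ) + 1)) * ((k:ℝ) + 2)⁻¹) - A := by
      filter_upwards [eventually_ge_atTop 1] with k hk
      have hk0 : ((k:ℝ)) ≠ 0 := by positivity
      have hk1 : ((k:ℝ) + 1) ≠ 0 := by positivity
      have hk2 : ((k:ℝ) + 2) ≠ 0 := by positivity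
      rw [hL]
      field_simp
    have : Tendsto (fun k : ℕ =>
        A * ((k:ℝ) / ((k:ℝ) + 1)) - A * b * (((k:ℝ) / ((k:ℝ) + 1)) * ((k:ℝ) + 2)⁻¹) - A)
        atTop (nhds (A * 1 - A * b * (1 * 0) - A)) :=
      (((t1.const_mul A).sub ((t1.mul t2).const_mul (A * b)))).sub tendsto_const_nhds
    rw [show A * 1 - A * b * (1 * 0) - A = 0 by ring] at this
    exact Tendsto.congr' (hLeq.mono fun k hk => hk.symm) this
  have hUlim : Tendsto U atTop (nhds 0) := by
    have t3 : Tendsto (fun k : ℕ => (k:ℝ) / ((k:ℝ) + (1 - A))) atTop (nhds 1) :=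
      tendsto_natCast_div_add_atTop (1 - A)
    have hUeq : ∀ᶠ k : ℕ in atTop, U k = A * ((k:ℝ) / ((k:ℝ) + (1 - A))) - A := by
      filter_upwards [eventually_ge_atTop 1,
        tendsto_natCast_atTop_atTop.eventually_ge_atTop (2 * A)] with k hk hk2
      have hk0 : ((k:ℝ)) ≠ 0 := by positivity
      have hk1 : ((k:ℝ) + 1) ≠ 0 := by positivity
      have hkge1 : (1:ℝ) ≤ (k:ℝ) := by exact_mod_cast hk
      have hkA : ((k:ℝ) + (1 - A)) ≠ 0 := by
        have : A ≤ (k:ℝ) / 2 := by linarith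
        have h2 : (0:ℝ) < (k:ℝ) + 1 - A := by linarith
        intro h; rw [show (k:ℝ) + (1 - A) = (k:ℝ) + 1 - A by ring] at h; linarith
      have hkhalf : A ≤ (k:ℝ) / 2 := by linarith
      have hkA' : ((k:ℝ) + 1 - A) ≠ 0 :=
        ne_of_gt (by linarith : (0:ℝ) < (k:ℝ) + 1 - A)
      have e1 : 1 - A * (1 / ((k:ℝ) + 1)) = ((k:ℝ) + 1 - A) / ((k:ℝ) + 1) := by
        field_simp
      simp only [hU]
      rw [e1, inv_div, show (k:ℝ) + (1 - A) = (k:ℝ) + 1 - A from by ring]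
      field_simp
      ring
    have : Tendsto (fun k : ℕ => A * ((k:ℝ) / ((k:ℝ) + (1 - A))) - A)
        atTop (nhds (A * 1 - A)) := (t3.const_mul A).sub tendsto_const_nhds
    rw [show A * 1 - A = 0 by ring] at this
    exact Tendsto.congr' (hUeq.mono fun k hk => hk.symm) this
  apply tendsto_of_tendsto_of_tendsto_of_le_of_le' hLlim hUlim
  · filter_upwards [hev] with k hk
    exact (key k hk.1 hk.2).1
  · filter_upwards [hev] with k hk
    exact (key k hk.1 hk.2).2
end

section
/- Let f : [0,1] → ℝ be a probability density function (nonnegative, integrable, ∫₀¹ f(p) dp = 1) that is continuous at 0 with f(0) = c > 0. Then −log(pass_D@k) = c·k^(−1) + o(k^(−1)) as k → ∞, where pass_D@k := 1 − ∫₀¹ (1−p)^k f(p) dp; that is, any continuous density with nonzero constant density at p = 0 yields power-law scaling of the negative log aggregate success rate with exponent 1 and leading coefficient c. -/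
open MeasureTheory Real Filter Topology

/-- **Any continuous density with nonzero constant density at `0`: power law
with exponent 1.** If a probability density `f` on `[0,1]` is continuous at `0`
(from within `[0,1]`) with `f(0) = c > 0`, then
`-log(pass_D@k) = c·k^(-1) + o(k^(-1))` as `k → ∞`. -/
theorem neg_log_pass_continuous_density_at_zero
    (f : ℝ → ℝ) (c : ℝ)
    (hf_nonneg : ∀ p ∈ Set.Icc (0:ℝ) 1, 0 ≤ f p)
    (hf_int : IntervalIntegrable f volume 0 1)
    (hf_prob : (∫ p in (0:ℝ)..1, f p) = 1)
    (hf_cont : ContinuousWithinAt f (Set.Icc (0:ℝ) 1) 0)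
    (hf_zero : f 0 = c) (hc : 0 < c) :
    Tendsto
      (fun k : ℕ =>
        ((-Real.log (1 - ∫ p in (0:ℝ)..1, (1 - p) ^ k * f p))
            - c * (k : ℝ)⁻¹) * (k : ℝ))
      atTop (nhds 0) := by
  set I : ℕ → ℝ := fun k => ∫ p in (0:ℝ)..1, (1 - p) ^ k * f p with hI
  -- the normalizing integral ∫ (1-x)^n on Icc 0 1 equals 1/(n+1)
  have hnorm : ∀ n : ℕ, (∫ x in Set.Icc (0:ℝ) 1, (1 - x) ^ n) = ((n:ℝ) + 1)⁻¹ := by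
    intro n
    have h1 : (∫ x in Set.Icc (0:ℝ) 1, (1 - x) ^ n)
        = ∫ x in (0:ℝ)..1, (1 - x) ^ n := by
      rw [intervalIntegral.integral_of_le zero_le_one,
        integral_Icc_eq_integral_Ioc]
    have h2 : (∫ x in (0:ℝ)..1, (1 - x) ^ n) = ∫ x in (0:ℝ)..1, x ^ n := by
      have := intervalIntegral.integral_comp_sub_left (a := (0:ℝ)) (b := 1)
        (fun x => x ^ n) 1
      simpa using this
    rw [h1, h2, integral_pow]
    norm_num
  -- relation between I k and set integral on Icc
  have hIset : ∀ k : ℕ, I k = ∫ x in Set.Icc (0:ℝ) 1, (1 - x) ^ k • f x := by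
    intro k
    rw [hI]
    simp only [smul_eq_mul]
    rw [intervalIntegral.integral_of_le zero_le_one, integral_Icc_eq_integral_Ioc]
  -- peak function lemma : (k+1) * I k → c
  have hpeak : Tendsto (fun k : ℕ => ((k:ℝ) + 1) * I k) atTop (𝓝 c) := by
    have hint : IntegrableOn f (Set.Icc (0:ℝ) 1) volume := by
      have := hf_int.1
      rwa [← integrableOn_Icc_iff_integrableOn_Ioc] at this
    have := tendsto_setIntegral_pow_smul_of_unique_maximum_of_isCompact_of_integrableOn
      (μ := volume) (s := Set.Icc (0:ℝ) 1) (x₀ := (0:ℝ)) (g := f) (c := fun x => 1 - x)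
      isCompact_Icc
      (by fun_prop)
      (by intro y hy hy0; have h0y : 0 < y := lt_of_le_of_ne hy.1 (Ne.symm hy0); linarith)
      (by intro x hx; linarith [hx.2])
      (by norm_num)
      (by
        rw [interior_Icc, closure_Ioo (by norm_num : (0:ℝ) ≠ 1)]
        exact Set.left_mem_Icc.2 zero_le_one)
      hint hf_cont
    simp only [hnorm, smul_eq_mul, hf_zero] at this
    have heq : ∀ k : ℕ, (((k:ℝ) + 1)⁻¹)⁻¹ * (∫ x in Set.Icc (0:ℝ) 1, (1 - x) ^ k • f x)
        = ((k:ℝ) + 1) * I k := by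
      intro k; rw [inv_inv, hIset]
    exact (Tendsto.congr heq this)
  -- I k → 0
  have hI0 : Tendsto I atTop (𝓝 0) := by
    have hinv : Tendsto (fun k : ℕ => ((k:ℝ) + 1)⁻¹) atTop (𝓝 0) :=
      tendsto_inv_atTop_zero.comp
        (tendsto_atTop_add_const_right _ 1 tendsto_natCast_atTop_atTop)
    have h1 : Tendsto (fun k : ℕ => (((k:ℝ) + 1) * I k) * ((k:ℝ)+1)⁻¹) atTop (𝓝 (c * 0)) :=
      hpeak.mul hinv
    rw [mul_zero] at h1
    refine h1.congr fun k => ?_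
    field_simp
  -- k * I k → c
  have hkI : Tendsto (fun k : ℕ => (k:ℝ) * I k) atTop (𝓝 c) := by
    have := hpeak.sub hI0
    rw [sub_zero] at this
    refine this.congr fun k => by ring
  -- eventually I k > 0
  have hIpos : ∀ᶠ k : ℕ in atTop, 0 < I k := by
    have := hkI.eventually (eventually_gt_nhds (show c/2 < c by linarith))
    filter_upwards [this, eventually_gt_atTop 0] with k h1 h2
    have hk : (0:ℝ) < (k:ℝ) := by exact_mod_cast h2
    nlinarith
  -- eventually I k < 1
  have hIlt : ∀ᶠ k : ℕ in atTop, I k < 1/2 :=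
    hI0.eventually (eventually_lt_nhds (by norm_num : (0:ℝ) < 1/2))
  -- log(1 - x)/x → -1 as x → 0, x ≠ 0
  have hlog : Tendsto (fun x : ℝ => Real.log (1 - x) / x) (𝓝[≠] (0:ℝ)) (𝓝 (-1)) := by
    have hd : HasDerivAt (fun x : ℝ => Real.log (1 - x)) (-1) 0 := by
      have h1 : HasDerivAt (fun x : ℝ => 1 - x) (-1) 0 := by
        simpa using (hasDerivAt_id (0:ℝ)).const_sub (1:ℝ)
      have h2 := (Real.hasDerivAt_log (by norm_num : (1:ℝ) - 0 ≠ 0)).comp 0 h1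
      simpa [Function.comp_def] using h2
    have := hasDerivAt_iff_tendsto_slope.1 hd
    refine this.congr' ?_
    filter_upwards [self_mem_nhdsWithin] with x hx
    simp [slope_def_field, div_eq_div_iff, sub_eq_zero]
  -- compose : log(1 - I k)/I k → -1
  have hIne : Tendsto I atTop (𝓝[≠] (0:ℝ)) := by
    refine tendsto_nhdsWithin_iff.2 ⟨hI0, ?_⟩
    filter_upwards [hIpos] with k hk
    exact ne_of_gt hk
  have hlogI : Tendsto (fun k : ℕ => Real.log (1 - I k) / I k) atTop (𝓝 (-1)) :=
    hlog.comp hIne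
  -- combine
  have hmain : Tendsto (fun k : ℕ => ((k:ℝ) * I k) * (-(Real.log (1 - I k) / I k)) - c)
      atTop (𝓝 0) := by
    have := (hkI.mul hlogI.neg).sub (tendsto_const_nhds (x := c))
    simpa using this
  refine hmain.congr' ?_
  filter_upwards [hIpos, eventually_gt_atTop 0] with k hk hk1
  have hkR : (0:ℝ) < (k:ℝ) := Nat.cast_pos.2 hk1
  field_simp
  ring
end

section
/- Let 0 < a < b < 1 and let p follow the Reciprocal(a, b) distribution with density f(x) = 1/((log b − log a)·x) on [a, b]. Let I_k := ∫_a^b (1−p)^k f(p) dp and pass_{Reciprocal(a,b)}@k := 1 − I_k. Then I_k = Θ((1−a)^k / k) as k → ∞ (i.e., there exist constants 0 < c₁ ≤ c₂ and k₀ such that for all k ≥ k₀, c₁·(1−a)^k/k ≤ I_k ≤ c₂·(1−a)^k/k), and consequently −log(pass_{Reciprocal(a,b)}@k) = Θ((1−a)^k / k); in particular the negative log aggregate success rate converges to 0 exponentially fast in k and is not a power law in k. -/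
open MeasureTheory Real

private lemma recip_Jeq (a b : ℝ) (k : ℕ) :
    ∫ p in a..b, (1-p)^k = ((1-a)^(k+1) - (1-b)^(k+1))/(k+1) := by
  have h := intervalIntegral.integral_comp_sub_left (a := a) (b := b) (fun x => x^k) 1
  rw [h, integral_pow]

private lemma recip_int (a b : ℝ) (ha : 0 < a) (hab : a < b) (k : ℕ) :
    IntervalIntegrable (fun p => (1-p)^k * (1 / ((Real.log b - Real.log a) * p))) volume a b := by
  apply ContinuousOn.intervalIntegrable
  apply ContinuousOn.mul (by fun_prop)
  apply ContinuousOn.div continuousOn_const (by fun_prop)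
  intro x hx
  rw [Set.uIcc_of_le hab.le] at hx
  have hx0 : 0 < x := lt_of_lt_of_le ha hx.1
  have hL : 0 < Real.log b - Real.log a := sub_pos.2 (Real.log_lt_log ha hab)
  positivity

private lemma recip_core (a b : ℝ) (ha : 0 < a) (hab : a < b) (hb : b < 1) :
    ∃ c₁ c₂ : ℝ, 0 < c₁ ∧ c₁ ≤ c₂ ∧ ∃ k₀ : ℕ, 1 ≤ k₀ ∧ ∀ k : ℕ, k₀ ≤ k →
      c₁ * (1 - a) ^ k / (k : ℝ)
          ≤ (∫ p in a..b, (1 - p) ^ k * (1 / ((Real.log b - Real.log a) * p))) ∧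
        (∫ p in a..b, (1 - p) ^ k * (1 / ((Real.log b - Real.log a) * p)))
          ≤ c₂ * (1 - a) ^ k / (k : ℝ) := by
  set L := Real.log b - Real.log a with hLdef
  have hb0 : 0 < b := ha.trans hab
  have hL : 0 < L := sub_pos.2 (Real.log_lt_log ha hab)
  have hint : ∀ k : ℕ, IntervalIntegrable (fun p => (1-p)^k * (1 / (L * p))) volume a b :=
    fun k => recip_int a b ha hab k
  clear_value L
  clear hLdef
  have ha1 : 0 < 1 - a := by linarith
  have hb1 : 0 < 1 - b := by linarith
  have hr1 : (1 - b) / (1 - a) < 1 := by rw [div_lt_one ha1]; linarith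
  have hr0 : 0 ≤ (1 - b) / (1 - a) := by positivity
  obtain ⟨n, hn⟩ := exists_pow_lt_of_lt_one (by norm_num : (0:ℝ) < 1/2) hr1
  refine ⟨(1-a)/(4*L*b), 1/(L*a), by positivity, ?_, n + 1, by omega, ?_⟩
  · rw [div_le_div_iff₀ (by positivity) (by positivity)]
    nlinarith [mul_pos hL ha, mul_pos hL hb0]
  intro k hk
  have hk1 : 1 ≤ k := le_trans (by omega) hk
  have hkR : (1:ℝ) ≤ (k:ℝ) := by exact_mod_cast hk1
  have hkpos : (0:ℝ) < k := by linarith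
  have hupper : (∫ p in a..b, (1 - p) ^ k * (1 / (L * p)))
      ≤ ∫ p in a..b, (1/(L*a)) * (1 - p) ^ k := by
    apply intervalIntegral.integral_mono_on hab.le (hint k)
    · exact (Continuous.continuousOn (by continuity)).intervalIntegrable
    · intro x hx
      have hx1 : (0:ℝ) ≤ (1 - x)^k := pow_nonneg (by linarith [hx.2]) k
      calc (1-x)^k * (1/(L*x)) = 1/(L*x) * (1-x)^k := by ring
        _ ≤ 1/(L*a) * (1-x)^k := mul_le_mul_of_nonneg_right
            (one_div_le_one_div_of_le (by positivity) (mul_le_mul_of_nonneg_left hx.1 hL.le)) hx1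
  have hlower : (∫ p in a..b, (1/(L*b)) * (1 - p) ^ k)
      ≤ ∫ p in a..b, (1 - p) ^ k * (1 / (L * p)) := by
    apply intervalIntegral.integral_mono_on hab.le
      ((Continuous.continuousOn (by continuity)).intervalIntegrable) (hint k)
    intro x hx
    have hx0 : 0 < x := lt_of_lt_of_le ha hx.1
    have hx1 : (0:ℝ) ≤ (1 - x)^k := pow_nonneg (by linarith [hx.2]) k
    calc 1/(L*b) * (1-x)^k ≤ 1/(L*x) * (1-x)^k := mul_le_mul_of_nonneg_right
            (one_div_le_one_div_of_le (by positivity) (mul_le_mul_of_nonneg_left hx.2 hL.le)) hx1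
      _ = (1-x)^k * (1/(L*x)) := by ring
  rw [intervalIntegral.integral_const_mul, recip_Jeq] at hupper hlower
  have hpow : (1-b)^(k+1) ≤ (1/2) * (1-a)^(k+1) := by
    have h1 : ((1-b)/(1-a))^(k+1) ≤ ((1-b)/(1-a))^n :=
      pow_le_pow_of_le_one hr0 hr1.le (by omega)
    calc (1-b)^(k+1) = ((1-b)/(1-a))^(k+1) * (1-a)^(k+1) := by
          rw [div_pow, div_mul_cancel₀]; positivity
      _ ≤ (1/2) * (1-a)^(k+1) :=
          mul_le_mul_of_nonneg_right (h1.trans hn.le) (by positivity)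
  have hsplit : (1-a)^(k+1) = (1-a) * (1-a)^k := by ring
  have hap : (0:ℝ) < (1-a)^k := by positivity
  have hkk : ((k:ℝ)+1) ≤ 2*(k:ℝ) := by linarith
  set J : ℝ := (1-a)^(k+1) - (1-b)^(k+1) with hJdef
  have hJlb : (1-a)*(1-a)^k/2 ≤ J := by
    rw [hJdef, hsplit]; nlinarith [hpow]
  have hJub : J ≤ (1-a)^k := by
    have hbp : (0:ℝ) ≤ (1-b)^(k+1) := by positivity
    rw [hJdef, hsplit]; nlinarith [hap]
  have hJ0 : (0:ℝ) ≤ J := le_trans (by positivity) hJlb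
  clear_value J
  constructor
  · refine le_trans ?_ hlower
    calc (1-a)/(4*L*b) * (1-a)^k / (k:ℝ)
        = ((1-a)*(1-a)^k/2) / ((L*b) * (2*(k:ℝ))) := by
          field_simp; ring
      _ ≤ J / ((L*b)*((k:ℝ)+1)) :=
          div_le_div₀ hJ0 hJlb (by positivity)
            (mul_le_mul_of_nonneg_left hkk (by positivity))
      _ = 1/(L*b) * (J/((k:ℝ)+1)) := by
          field_simp
  · refine hupper.trans ?_
    calc (1:ℝ)/(L*a) * (J/((k:ℝ)+1)) = J / ((L*a)*((k:ℝ)+1)) := by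
          field_simp
      _ ≤ (1-a)^k / ((L*a)*(k:ℝ)) :=
          div_le_div₀ hap.le hJub (by positivity)
            (mul_le_mul_of_nonneg_left (by linarith) (by positivity))
      _ = 1/(L*a) * (1-a)^k / (k:ℝ) := by
          field_simp

/-- **Reciprocal distribution: exponential, not power-law, decay.** If
per-attempt success probabilities follow `Reciprocal(a, b)` with `0 < a < b < 1`
and density `1/((log b - log a)·x)` on `[a, b]`, then
`I_k = ∫_a^b (1-p)^k f(p) dp = Θ((1-a)^k / k)` and consequently
`-log(pass_{Reciprocal(a,b)}@k) = Θ((1-a)^k / k)` as `k → ∞`. -/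
theorem neg_log_pass_reciprocal_exponential
    (a b : ℝ) (ha : 0 < a) (hab : a < b) (hb : b < 1) :
    (∃ c₁ c₂ : ℝ, 0 < c₁ ∧ c₁ ≤ c₂ ∧ ∃ k₀ : ℕ, ∀ k : ℕ, k₀ ≤ k →
      c₁ * (1 - a) ^ k / (k : ℝ)
          ≤ (∫ p in a..b, (1 - p) ^ k * (1 / ((Real.log b - Real.log a) * p))) ∧
        (∫ p in a..b, (1 - p) ^ k * (1 / ((Real.log b - Real.log a) * p)))
          ≤ c₂ * (1 - a) ^ k / (k : ℝ)) ∧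
    (∃ c₁ c₂ : ℝ, 0 < c₁ ∧ c₁ ≤ c₂ ∧ ∃ k₀ : ℕ, ∀ k : ℕ, k₀ ≤ k →
      c₁ * (1 - a) ^ k / (k : ℝ)
          ≤ -Real.log (1 - ∫ p in a..b, (1 - p) ^ k *
              (1 / ((Real.log b - Real.log a) * p))) ∧
        -Real.log (1 - ∫ p in a..b, (1 - p) ^ k *
              (1 / ((Real.log b - Real.log a) * p)))
          ≤ c₂ * (1 - a) ^ k / (k : ℝ)) := by
  obtain ⟨c₁, c₂, hc₁, hc₁₂, k₀, hk₀1, hmain⟩ := recip_core a b ha hab hb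
  have hc₂ : 0 < c₂ := lt_of_lt_of_le hc₁ hc₁₂
  constructor
  · exact ⟨c₁, c₂, hc₁, hc₁₂, k₀, fun k hk => hmain k hk⟩
  · -- choose K large enough that I_k ≤ 1/2
    obtain ⟨K, hK⟩ := exists_nat_ge (2 * c₂)
    refine ⟨c₁, 2 * c₂, hc₁, by linarith, max k₀ (K + 1), fun k hk => ?_⟩
    have hk₀ : k₀ ≤ k := le_trans (le_max_left _ _) hk
    have hkK : K + 1 ≤ k := le_trans (le_max_right _ _) hk
    obtain ⟨hlo, hhi⟩ := hmain k hk₀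
    set I : ℝ := ∫ p in a..b, (1 - p) ^ k * (1 / ((Real.log b - Real.log a) * p)) with hIdef
    have hk1 : 1 ≤ k := by omega
    have hkR : (1:ℝ) ≤ (k:ℝ) := by exact_mod_cast hk1
    have hkpos : (0:ℝ) < k := by linarith
    have ha1 : (0:ℝ) < 1 - a := by linarith
    have hI0 : 0 < I := lt_of_lt_of_le (by positivity) hlo
    have hIhalf : I ≤ 1/2 := by
      refine hhi.trans ?_
      have h1 : (1 - a)^k ≤ 1 := pow_le_one₀ ha1.le (by linarith)
      have hkc : 2 * c₂ ≤ (k:ℝ) := by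
        have : ((K:ℝ) + 1) ≤ (k:ℝ) := by exact_mod_cast hkK
        linarith
      rw [div_le_iff₀ hkpos]
      nlinarith
    have h1I : 0 < 1 - I := by linarith
    constructor
    · -- lower:  c₁ (1-a)^k / k ≤ I ≤ -log(1-I)
      refine hlo.trans ?_
      have := Real.log_le_sub_one_of_pos h1I
      linarith
    · -- upper: -log(1-I) ≤ I/(1-I) ≤ 2I ≤ 2c₂ (1-a)^k/k
      have h2 : -Real.log (1 - I) = Real.log (1 - I)⁻¹ := by
        rw [Real.log_inv]
      have h3 : Real.log (1 - I)⁻¹ ≤ (1 - I)⁻¹ - 1 :=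
        Real.log_le_sub_one_of_pos (by positivity)
      have h4 : (1 - I)⁻¹ - 1 = I / (1 - I) := by
        field_simp
        ring
      have h5 : I / (1 - I) ≤ 2 * I := by
        rw [div_le_iff₀ h1I]
        nlinarith
      have h6 : 2 * I ≤ 2 * (c₂ * (1-a)^k / (k:ℝ)) := by linarith
      calc -Real.log (1 - I) ≤ 2 * I := by rw [h2]; linarith [h3, h4.le, h5]
        _ ≤ 2 * c₂ * (1-a)^k / (k:ℝ) := by
            rw [show 2 * c₂ * (1-a)^k / (k:ℝ) = 2 * (c₂ * (1-a)^k / (k:ℝ)) from by ring]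
            linarith
end

section
/- Fix natural numbers n ≥ k ≥ 1 and p ∈ [0,1], and let C be a binomial random variable with parameters n and p (the number of successes among n independent attempts, each succeeding with probability p). Then the estimator 1 − binom(n−C, k)/binom(n, k) (with the convention that binom(m, k) = 0 when m < k) is an unbiased estimator of 1 − (1−p)^k; that is, E[1 − binom(n−C, k)/binom(n, k)] = 1 − (1−p)^k. -/
open Finset

lemma key_nat (n k c : ℕ) (hc : c ≤ n - k) (hkn : k ≤ n) :
    n.choose c * (n - c).choose k = n.choose k * (n - k).choose c := by
  have hck : c + k ≤ n := by omega
  have h1 := Nat.choose_mul (n := n) (k := c + k) (s := c) (Nat.le_add_right _ _)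
  have h2 := Nat.choose_mul (n := n) (k := c + k) (s := k) (Nat.le_add_left _ _)
  have hsym : (c + k).choose c = (c + k).choose k := by
    rw [← Nat.choose_symm (Nat.le_add_right _ _)]; simp
  simp only [Nat.add_sub_cancel, Nat.add_sub_cancel_left] at h1 h2
  rw [← h1, ← h2, hsym]

/-- **Unbiasedness of the Chen et al. (2021) `pass@k` estimator.** If `C` is
binomial with parameters `n` and `p` (so `P(C = c) = binom(n,c)·p^c·(1-p)^(n-c)`),
and `n ≥ k ≥ 1`, then
`E[1 - binom(n-C, k)/binom(n, k)] = 1 - (1-p)^k`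
(with the convention `binom(m, k) = 0` for `m < k`, which is `Nat.choose`'s). -/
theorem chen_estimator_unbiased
    (n k : ℕ) (hk : 1 ≤ k) (hkn : k ≤ n)
    (p : ℝ) (hp : p ∈ Set.Icc (0:ℝ) 1) :
    ∑ c ∈ Finset.range (n + 1),
        (n.choose c : ℝ) * p ^ c * (1 - p) ^ (n - c) *
          (1 - ((n - c).choose k : ℝ) / (n.choose k : ℝ))
      = 1 - (1 - p) ^ k := by
  have hNK : (0:ℝ) < (n.choose k : ℝ) := by
    exact_mod_cast Nat.choose_pos hkn
  set q : ℝ := 1 - p with hq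
  have hpq : p + q = 1 := by ring
  have hbin : ∀ m : ℕ, ∑ c ∈ Finset.range (m + 1),
      (m.choose c : ℝ) * p ^ c * q ^ (m - c) = 1 := by
    intro m
    have := add_pow p q m
    rw [hpq, one_pow] at this
    rw [this]
    apply Finset.sum_congr rfl
    intro c _
    ring
  have hsplit : ∀ c ∈ Finset.range (n + 1),
      (n.choose c : ℝ) * p ^ c * q ^ (n - c) *
          (1 - ((n - c).choose k : ℝ) / (n.choose k : ℝ))
      = (n.choose c : ℝ) * p ^ c * q ^ (n - c)
        - (n.choose c : ℝ) * ((n - c).choose k : ℝ) * p ^ c * q ^ (n - c)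
            / (n.choose k : ℝ) := by
    intro c _
    field_simp
  rw [Finset.sum_congr rfl hsplit, Finset.sum_sub_distrib, hbin n]
  have hmain : ∑ c ∈ Finset.range (n + 1),
      (n.choose c : ℝ) * ((n - c).choose k : ℝ) * p ^ c * q ^ (n - c)
      = (n.choose k : ℝ) * q ^ k := by
    rw [← Finset.sum_subset (Finset.range_subset_range.2 (by omega : n - k + 1 ≤ n + 1))
      (by
        intro c _ hc
        simp only [Finset.mem_range] at hc
        have : n - c < k := by omega
        rw [Nat.choose_eq_zero_of_lt this]
        simp)]
    have : ∀ c ∈ Finset.range (n - k + 1),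
        (n.choose c : ℝ) * ((n - c).choose k : ℝ) * p ^ c * q ^ (n - c)
        = (n.choose k : ℝ) * q ^ k * (((n - k).choose c : ℝ) * p ^ c * q ^ (n - k - c)) := by
      intro c hc
      simp only [Finset.mem_range] at hc
      have hc' : c ≤ n - k := by omega
      have hkey : (n.choose c : ℝ) * ((n - c).choose k : ℝ)
          = (n.choose k : ℝ) * ((n - k).choose c : ℝ) := by
        exact_mod_cast congrArg (Nat.cast : ℕ → ℝ) (key_nat n k c hc' hkn)
      have hexp : q ^ (n - c) = q ^ k * q ^ (n - k - c) := by
        rw [← pow_add]; congr 1; omega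
      rw [hexp]
      linear_combination (p ^ c * q ^ k * q ^ (n - k - c)) * hkey
    rw [Finset.sum_congr rfl this, ← Finset.mul_sum, hbin (n - k), mul_one]
  rw [← Finset.sum_div, hmain]
  field_simp
end
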